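/- arXiv:1506.02342 — 15 statements merged into one kernel-verified Lean document; each statement's English description precedes it below -/
import Mathlib

section
/- The invariant density integrates to one: ∫₀^N p_σ^s(x) dx = 1. Equivalently, ∫₀^N N³ x^{c₀(R₀ˢ−1)−1} (N−x)^{−(c₀(R₀ˢ−1)+3)} exp(−c₀ x/(N−x)) dx = c₀^{−c₀(R₀ˢ−1)} [(R₀ˢ)² + c₀⁻¹(R₀ˢ−1)] Γ(c₀(R₀ˢ−1)). -/
open Real MeasureTheory Filter Set Topology

/-- The invariant density integrates to one: `∫₀^N p_σ^s(x) dx = 1`. -/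
theorem invariant_density_integrates_to_one
    (N β μ γ σ : ℝ) (hN : 0 < N) (hβ : 0 < β) (hμ : 0 < μ) (hγ : 0 < γ) (hσ : 0 < σ)
    (R0S c0 C : ℝ)
    (hR0S : R0S = β * N / (μ + γ) - σ ^ 2 * N ^ 2 / (2 * (μ + γ)))
    (hc0 : c0 = 2 * (μ + γ) / (σ ^ 2 * N ^ 2))
    (hR : 1 < R0S)
    (hCpos : 0 < C)
    (hC : C⁻¹ = c0 ^ (-(c0 * (R0S - 1))) * (R0S ^ 2 + c0⁻¹ * (R0S - 1)) *
      Real.Gamma (c0 * (R0S - 1)))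
    (p : ℝ → ℝ)
    (hp : ∀ x, p x = C * N ^ 3 * x ^ (c0 * (R0S - 1) - 1) *
      (N - x) ^ (-(c0 * (R0S - 1) + 3)) * Real.exp (-c0 * x / (N - x))) :
    ∫ x in (0:ℝ)..N, p x = 1 := by
  have hc0pos : 0 < c0 := by rw [hc0]; positivity
  set a := c0 * (R0S - 1) with ha_def
  have ha : 0 < a := mul_pos hc0pos (by linarith)
  -- the substitution map
  have himg : (fun y => N*y/(1+y)) '' Ioi 0 = Ioo 0 N := by
    ext x
    constructor
    · rintro ⟨y, hy, rfl⟩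
      simp only [mem_Ioi] at hy
      have h1 : (0:ℝ) < 1 + y := by linarith
      constructor
      · positivity
      · rw [div_lt_iff₀ h1]; nlinarith
    · rintro ⟨hx1, hx2⟩
      have hNx : 0 < N - x := by linarith
      refine ⟨x/(N-x), ?_, ?_⟩
      · simp only [mem_Ioi]; positivity
      · have h1 : N - x ≠ 0 := ne_of_gt hNx
        field_simp
        ring
  have hinj : InjOn (fun y => N*y/(1+y)) (Ioi 0) := by
    intro y1 h1 y2 h2 h
    simp only [mem_Ioi] at h1 h2
    have e1 : (1:ℝ) + y1 ≠ 0 := by positivity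
    have e2 : (1:ℝ) + y2 ≠ 0 := by positivity
    field_simp at h
    nlinarith [hN.ne']
  have hderiv : ∀ y ∈ Ioi (0:ℝ),
      HasDerivWithinAt (fun y => N*y/(1+y)) (N/(1+y)^2) (Ioi 0) y := by
    intro y hy
    simp only [mem_Ioi] at hy
    have h1 : (1:ℝ) + y ≠ 0 := by positivity
    have := (((hasDerivAt_id y).const_mul N).div ((hasDerivAt_id y).const_add 1) h1)
    refine this.hasDerivWithinAt.congr_deriv ?_
    simp only [id]
    field_simp
    ring
  have hcv := integral_image_eq_integral_abs_deriv_smul measurableSet_Ioi hderiv hinj p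
  rw [himg] at hcv
  -- pointwise identity on `Ioi 0`
  have key : ∀ y ∈ Ioi (0:ℝ), |N/(1+y)^2| • p (N*y/(1+y))
      = C * (y^(a-1)*Real.exp (-(c0*y))) + (2*C) * (y^((a+1)-1)*Real.exp (-(c0*y)))
        + C * (y^((a+2)-1)*Real.exp (-(c0*y))) := by
    intro y hy
    simp only [mem_Ioi] at hy
    rw [hp]
    have hu : (0:ℝ) < 1 + y := by linarith
    have h1 : N - N*y/(1+y) = N/(1+y) := by field_simp; ring
    have h2 : -c0 * (N*y/(1+y)) / (N/(1+y)) = -(c0*y) := by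
      field_simp
    have e1 : (N*y/(1+y))^(a-1) = N^(a-1)*y^(a-1)/(1+y)^(a-1) := by
      rw [div_rpow (by positivity) hu.le, mul_rpow hN.le hy.le]
    have e2 : (N/(1+y))^(-(a+3)) = (1+y)^(a+3)/N^(a+3) := by
      rw [rpow_neg (by positivity), div_rpow hN.le hu.le, inv_div]
    have hNe : N^(a-1)*N^3*N = N^(a+3) := by
      rw [← rpow_natCast N 3, ← rpow_add hN, ← rpow_add_one hN.ne']
      congr 1
      push_cast
      ring
    have hue : (1+y)^(a-1)*(1+y)^2*(1+y)^2 = (1+y)^(a+3) := by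
      rw [← rpow_natCast (1+y) 2, ← rpow_add hu, ← rpow_add hu]
      congr 1
      push_cast
      ring
    have ey1 : y ^ (a+1-1) = y^(a-1) * y := by
      rw [show a+1-1 = (a-1)+1 by ring, rpow_add_one hy.ne']
    have ey2 : y ^ (a+2-1) = y^(a-1) * y^2 := by
      rw [show a+2-1 = (a-1)+1+1 by ring, rpow_add_one hy.ne', rpow_add_one hy.ne']
      ring
    rw [h1, h2, e1, e2, smul_eq_mul, abs_of_pos (by positivity), ← hNe, ← hue, ey1, ey2]
    have n1 : N^(a-1) ≠ 0 := by positivity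
    have n2 : (1+y)^(a-1) ≠ 0 := by positivity
    field_simp
    ring
  -- integrability of the three pieces
  have hint : ∀ s : ℝ, 0 < s → IntegrableOn (fun y => y^(s-1)*Real.exp (-(c0*y))) (Ioi 0) := by
    intro s hs
    have := integrableOn_rpow_mul_exp_neg_mul_rpow (p := 1) (s := s-1) (by linarith) one_pos hc0pos
    simpa [rpow_one, neg_mul] using this
  have I1 : IntegrableOn (fun y => C * (y^(a-1)*Real.exp (-(c0*y)))) (Ioi 0) :=
    (hint a ha).const_mul C
  have I2 : IntegrableOn (fun y => (2*C) * (y^((a+1)-1)*Real.exp (-(c0*y)))) (Ioi 0) :=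
    (hint (a+1) (by linarith)).const_mul (2*C)
  have I3 : IntegrableOn (fun y => C * (y^((a+2)-1)*Real.exp (-(c0*y)))) (Ioi 0) :=
    (hint (a+2) (by linarith)).const_mul C
  have I12 : IntegrableOn (fun y => C * (y^(a-1)*Real.exp (-(c0*y)))
      + (2*C) * (y^((a+1)-1)*Real.exp (-(c0*y)))) (Ioi 0) := I1.add I2
  -- put it together
  rw [intervalIntegral.integral_of_le hN.le, integral_Ioc_eq_integral_Ioo, hcv, setIntegral_congr_fun measurableSet_Ioi key,
    integral_add I12 I3, integral_add I1 I2,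
    integral_const_mul, integral_const_mul, integral_const_mul,
    integral_rpow_mul_exp_neg_mul_Ioi ha hc0pos,
    integral_rpow_mul_exp_neg_mul_Ioi (by linarith : (0:ℝ) < a+1) hc0pos,
    integral_rpow_mul_exp_neg_mul_Ioi (by linarith : (0:ℝ) < a+2) hc0pos]
  -- final algebra
  have hpow : (1/c0 : ℝ)^a = c0^(-a) := by
    rw [one_div, rpow_neg hc0pos.le, inv_rpow hc0pos.le]
  have hG1 : Real.Gamma (a+1) = a * Real.Gamma a := Real.Gamma_add_one ha.ne'
  have hG2 : Real.Gamma (a+2) = (a+1) * (a * Real.Gamma a) := by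
    rw [show a+2 = (a+1)+1 by ring, Real.Gamma_add_one (by positivity), hG1]
  have hp1 : (1/c0 : ℝ)^(a+1) = (1/c0)^a * (1/c0) := rpow_add_one (by positivity) a
  have hp2 : (1/c0 : ℝ)^(a+2) = (1/c0)^a * (1/c0) * (1/c0) := by
    rw [show a+2 = (a+1)+1 by ring, rpow_add_one (by positivity), hp1]
  rw [hG1, hG2, hp1, hp2]
  have halg : C * ((1 / c0) ^ a * Real.Gamma a) + 2 * C * ((1 / c0) ^ a * (1 / c0) * (a * Real.Gamma a))
      + C * ((1 / c0) ^ a * (1 / c0) * (1 / c0) * ((a + 1) * (a * Real.Gamma a)))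
      = C * C⁻¹ := by
    rw [hC, ← hpow, ha_def]
    field_simp
    ring
  rw [halg, mul_inv_cancel₀ hCpos.ne']
end

section
/- The invariant density p_σ^s solves the stationary Fokker–Planck equation: for every x ∈ (0,N), x(βN − μ − γ − βx) p_σ^s(x) − (σ²/2) · d/dx [x²(N−x)² p_σ^s(x)] = 0, where the function x ↦ x²(N−x)² p_σ^s(x) is differentiable on (0,N). -/
open Real MeasureTheory Filter Set Topology

/-- The invariant density solves the stationary Fokker–Planck equation on `(0,N)`. -/
theorem invariant_density_solves_stationary_FPE
    (N β μ γ σ : ℝ) (hN : 0 < N) (hβ : 0 < β) (hμ : 0 < μ) (hγ : 0 < γ) (hσ : 0 < σ)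
    (R0S c0 C : ℝ)
    (hR0S : R0S = β * N / (μ + γ) - σ ^ 2 * N ^ 2 / (2 * (μ + γ)))
    (hc0 : c0 = 2 * (μ + γ) / (σ ^ 2 * N ^ 2))
    (hR : 1 < R0S)
    (hCpos : 0 < C)
    (hC : C⁻¹ = c0 ^ (-(c0 * (R0S - 1))) * (R0S ^ 2 + c0⁻¹ * (R0S - 1)) *
      Real.Gamma (c0 * (R0S - 1)))
    (p : ℝ → ℝ)
    (hp : ∀ x, p x = C * N ^ 3 * x ^ (c0 * (R0S - 1) - 1) *
      (N - x) ^ (-(c0 * (R0S - 1) + 3)) * Real.exp (-c0 * x / (N - x))) :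
    ∀ x ∈ Set.Ioo (0:ℝ) N, ∃ d : ℝ,
      HasDerivAt (fun y => y ^ 2 * (N - y) ^ 2 * p y) d x ∧
      x * (β * N - μ - γ - β * x) * p x - σ ^ 2 / 2 * d = 0 := by
  intro x hx
  obtain ⟨hx0, hxN⟩ := hx
  have hNx : 0 < N - x := sub_pos.mpr hxN
  set a : ℝ := c0 * (R0S - 1) with ha
  set u : ℝ → ℝ := fun y =>
    (a + 1) * Real.log y - (a + 1) * Real.log (N - y) - c0 * y / (N - y) with hudef
  -- the key rewriting of the function on (0, N)
  have key : ∀ y ∈ Set.Ioo (0:ℝ) N,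
      y ^ 2 * (N - y) ^ 2 * p y = C * N ^ 3 * Real.exp (u y) := by
    intro y hy
    have hy0 : 0 < y := hy.1
    have hNy : 0 < N - y := sub_pos.mpr hy.2
    have e1 : y ^ 2 = Real.exp (Real.log y * 2) := by
      rw [← Real.rpow_natCast y 2, Real.rpow_def_of_pos hy0]
      norm_num
    have e2 : (N - y) ^ 2 = Real.exp (Real.log (N - y) * 2) := by
      rw [← Real.rpow_natCast (N - y) 2, Real.rpow_def_of_pos hNy]
      norm_num
    have comb : Real.exp (Real.log y * 2) * Real.exp (Real.log (N - y) * 2) *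
        Real.exp (Real.log y * (a - 1)) * Real.exp (Real.log (N - y) * (-(a + 3))) *
        Real.exp (-c0 * y / (N - y)) = Real.exp (u y) := by
      rw [← Real.exp_add, ← Real.exp_add, ← Real.exp_add, ← Real.exp_add]
      congr 1
      simp only [hudef]
      ring
    rw [hp y, Real.rpow_def_of_pos hy0, Real.rpow_def_of_pos hNy, e1, e2]
    linear_combination (C * N ^ 3) * comb
  -- derivative of u
  have hlog : HasDerivAt Real.log x⁻¹ x := Real.hasDerivAt_log hx0.ne'
  have hsub : HasDerivAt (fun y => N - y) (-1) x := by
    exact (hasDerivAt_id' x).const_sub N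
  have hlogN : HasDerivAt (fun y => Real.log (N - y)) ((N - x)⁻¹ * (-1)) x :=
    (Real.hasDerivAt_log hNx.ne').comp x hsub
  have hdiv : HasDerivAt (fun y => c0 * y / (N - y)) (c0 * N / (N - x) ^ 2) x := by
    have h1 : HasDerivAt (fun y => c0 * y) c0 x := by
      simpa using (hasDerivAt_id x).const_mul c0
    have h2 : HasDerivAt (fun y => c0 * y / (N - y))
        ((c0 * (N - x) - c0 * x * -1) / (N - x) ^ 2) x := h1.div hsub hNx.ne'
    convert h2 using 1
    ring
  set D : ℝ := (a + 1) * x⁻¹ - (a + 1) * ((N - x)⁻¹ * (-1)) - c0 * N / (N - x) ^ 2 with hD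
  have hu' : HasDerivAt u D x :=
    ((hlog.const_mul (a + 1)).sub (hlogN.const_mul (a + 1))).sub hdiv
  have hF : HasDerivAt (fun y => C * N ^ 3 * Real.exp (u y))
      (C * N ^ 3 * (Real.exp (u x) * D)) x := (hu'.exp).const_mul (C * N ^ 3)
  have hmem : Set.Ioo (0:ℝ) N ∈ 𝓝 x := isOpen_Ioo.mem_nhds ⟨hx0, hxN⟩
  have heq : (fun y => y ^ 2 * (N - y) ^ 2 * p y) =ᶠ[𝓝 x]
      (fun y => C * N ^ 3 * Real.exp (u y)) :=
    Filter.eventuallyEq_of_mem hmem (fun y hy => key y hy)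
  have hG : HasDerivAt (fun y => y ^ 2 * (N - y) ^ 2 * p y)
      (C * N ^ 3 * (Real.exp (u x) * D)) x := hF.congr_of_eventuallyEq heq
  refine ⟨_, hG, ?_⟩
  have keyx := key x ⟨hx0, hxN⟩
  have hμγ : (0:ℝ) < μ + γ := by linarith
  have halg : x * (β * N - μ - γ - β * x) = σ ^ 2 / 2 * (x ^ 2 * (N - x) ^ 2) * D := by
    rw [hD, ha, hR0S, hc0]
    field_simp
    ring
  linear_combination p x * halg + σ ^ 2 / 2 * D * keyx
end

section
/- The function u_σ^s is twice differentiable on ℝ and solves the stationary Fokker–Planck equation: for every ξ ∈ ℝ, −d/dξ { [ (βN − μ − γ − σ²N²/2) − (μ+γ)e^ξ + σ²N² e^ξ/(1 + e^ξ) ] u_σ^s(ξ) } + (σ²N²/2) (u_σ^s)''(ξ) = 0. -/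
open Real MeasureTheory Filter Set Topology

/-- `u_σ^s` is twice differentiable on `ℝ` and solves the stationary
Fokker–Planck equation. -/
theorem u_solves_stationary_FPE
    (N β μ γ σ : ℝ) (hN : 0 < N) (hβ : 0 < β) (hμ : 0 < μ) (hγ : 0 < γ) (hσ : 0 < σ)
    (R0S c0 C : ℝ)
    (hR0S : R0S = β * N / (μ + γ) - σ ^ 2 * N ^ 2 / (2 * (μ + γ)))
    (hc0 : c0 = 2 * (μ + γ) / (σ ^ 2 * N ^ 2))
    (hR : 1 < R0S)
    (hCpos : 0 < C)
    (hC : C⁻¹ = c0 ^ (-(c0 * (R0S - 1))) * (R0S ^ 2 + c0⁻¹ * (R0S - 1)) *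
      Real.Gamma (c0 * (R0S - 1)))
    (u : ℝ → ℝ)
    (hu : ∀ ξ, u ξ = C * Real.exp (c0 * (R0S - 1) * ξ - c0 * Real.exp ξ +
      2 * Real.log (Real.exp ξ + 1))) :
    Differentiable ℝ u ∧ Differentiable ℝ (deriv u) ∧
    ∀ ξ : ℝ,
      -(deriv (fun η => ((β * N - μ - γ - σ ^ 2 * N ^ 2 / 2) - (μ + γ) * Real.exp η +
          σ ^ 2 * N ^ 2 * Real.exp η / (1 + Real.exp η)) * u η) ξ) +
        σ ^ 2 * N ^ 2 / 2 * deriv (deriv u) ξ = 0 := by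
  have hueq : u = fun ξ => C * Real.exp (c0 * (R0S - 1) * ξ - c0 * Real.exp ξ +
      2 * Real.log (Real.exp ξ + 1)) := funext hu
  set a := c0 * (R0S - 1) with ha
  set w : ℝ → ℝ := fun ξ => a - c0 * Real.exp ξ + 2 * (Real.exp ξ / (Real.exp ξ + 1)) with hw
  -- derivative of the exponent
  have hepos : ∀ ξ : ℝ, (0:ℝ) < Real.exp ξ + 1 := fun ξ => by positivity
  have hf : ∀ ξ : ℝ, HasDerivAt (fun ξ => a * ξ - c0 * Real.exp ξ +
      2 * Real.log (Real.exp ξ + 1)) (w ξ) ξ := by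
    intro ξ
    have h1 : HasDerivAt (fun ξ : ℝ => a * ξ) a ξ := by
      simpa using (hasDerivAt_id ξ).const_mul a
    have h2 : HasDerivAt (fun ξ => c0 * Real.exp ξ) (c0 * Real.exp ξ) ξ :=
      (Real.hasDerivAt_exp ξ).const_mul c0
    have h3 : HasDerivAt (fun ξ => Real.exp ξ + 1) (Real.exp ξ) ξ :=
      (Real.hasDerivAt_exp ξ).add_const 1
    have h4 : HasDerivAt (fun ξ => Real.log (Real.exp ξ + 1))
        (Real.exp ξ / (Real.exp ξ + 1)) ξ := h3.log (hepos ξ).ne'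
    exact (h1.sub h2).add (h4.const_mul 2)
  -- first derivative of u
  have hu' : ∀ ξ : ℝ, HasDerivAt u (w ξ * u ξ) ξ := by
    intro ξ
    rw [hueq]
    have := ((hf ξ).exp).const_mul C
    refine this.congr_deriv ?_
    ring
  have hderiv : deriv u = fun ξ => w ξ * u ξ := funext fun ξ => (hu' ξ).deriv
  have hdiffu : Differentiable ℝ u := fun ξ => (hu' ξ).differentiableAt
  -- derivative of w
  have hw' : ∀ ξ : ℝ, HasDerivAt w
      (-(c0 * Real.exp ξ) + 2 * ((Real.exp ξ * (Real.exp ξ + 1) -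
        Real.exp ξ * Real.exp ξ) / (Real.exp ξ + 1) ^ 2)) ξ := by
    intro ξ
    have h2 : HasDerivAt (fun ξ => a - c0 * Real.exp ξ) (-(c0 * Real.exp ξ)) ξ :=
      ((Real.hasDerivAt_exp ξ).const_mul c0).const_sub a
    have h3 : HasDerivAt (fun ξ => Real.exp ξ + 1) (Real.exp ξ) ξ :=
      (Real.hasDerivAt_exp ξ).add_const 1
    have h4 : HasDerivAt (fun ξ => Real.exp ξ / (Real.exp ξ + 1))
        ((Real.exp ξ * (Real.exp ξ + 1) - Real.exp ξ * Real.exp ξ) / (Real.exp ξ + 1) ^ 2) ξ :=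
      (Real.hasDerivAt_exp ξ).div h3 (hepos ξ).ne'
    exact h2.add (h4.const_mul 2)
  have hdiffu' : Differentiable ℝ (deriv u) := by
    rw [hderiv]
    exact fun ξ => ((hw' ξ).differentiableAt).mul (hu' ξ).differentiableAt
  refine ⟨hdiffu, hdiffu', fun ξ => ?_⟩
  -- key algebraic identity: the drift is D * w
  have hne : (μ + γ) ≠ 0 := by positivity
  have hσN : σ ^ 2 * N ^ 2 ≠ 0 := by positivity
  have hbw : ∀ η : ℝ, ((β * N - μ - γ - σ ^ 2 * N ^ 2 / 2) - (μ + γ) * Real.exp η +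
      σ ^ 2 * N ^ 2 * Real.exp η / (1 + Real.exp η)) = σ ^ 2 * N ^ 2 / 2 * w η := by
    intro η
    rw [hw, ha, hR0S, hc0]
    have h1 : (1:ℝ) + Real.exp η ≠ 0 := by positivity
    have h2 : Real.exp η + 1 ≠ 0 := (hepos η).ne'
    field_simp
    ring
  have hfun : (fun η => ((β * N - μ - γ - σ ^ 2 * N ^ 2 / 2) - (μ + γ) * Real.exp η +
      σ ^ 2 * N ^ 2 * Real.exp η / (1 + Real.exp η)) * u η)
      = fun η => σ ^ 2 * N ^ 2 / 2 * deriv u η := by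
    funext η
    rw [hbw η, hderiv]
    ring
  rw [hfun, deriv_const_mul _ (hdiffu' ξ)]
  ring
end

section
/- Mean of the stationary distribution: ∫₀^N x p_σ^s(x) dx = I^*(σ), where I^*(σ) = (1 − 1/(R₀ᴰ + 1 − R₀ᴰ/R₀ˢ)) N. -/
open Real MeasureTheory Filter Set Topology

lemma aux_integrable {s b : ℝ} (hs : 0 < s) (hb : 0 < b) :
    IntegrableOn (fun t : ℝ => t ^ (s - 1) * Real.exp (-(b * t))) (Ioi 0) := by
  have h1 : IntegrableOn (fun u : ℝ => Real.exp (-u) * u ^ (s - 1)) (Ioi 0) :=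
    Real.GammaIntegral_convergent hs
  have h2 : IntegrableOn (fun t : ℝ => Real.exp (-(b * t)) * (b * t) ^ (s - 1)) (Ioi 0) := by
    have := (integrableOn_Ioi_comp_mul_left_iff
      (fun u : ℝ => Real.exp (-u) * u ^ (s - 1)) 0 hb).2
    simpa using this (by simpa using h1)
  have h3 := h2.const_mul ((b ^ (s - 1))⁻¹)
  refine IntegrableOn.congr_fun h3 (fun t ht => ?_) measurableSet_Ioi
  have ht' : (0:ℝ) < t := ht
  rw [Real.mul_rpow hb.le ht'.le]
  field_simp [(Real.rpow_pos_of_pos hb (s-1)).ne']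

lemma aux_change {N : ℝ} (hN : 0 < N) (g : ℝ → ℝ) :
    ∫ x in Ioo (0:ℝ) N, g x = ∫ t in Ioi (0:ℝ), |N / (1 + t) ^ 2| • g (N * t / (1 + t)) := by
  have himg : (fun t : ℝ => N * t / (1 + t)) '' (Ioi 0) = Ioo 0 N := by
    ext x
    constructor
    · rintro ⟨t, ht, rfl⟩
      have ht' : (0:ℝ) < t := ht
      have hu : (0:ℝ) < 1 + t := by linarith
      constructor
      · positivity
      · rw [div_lt_iff₀ hu]; nlinarith
    · rintro ⟨hx0, hxN⟩
      refine ⟨x / (N - x), ?_, ?_⟩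
      · have : (0:ℝ) < N - x := by linarith
        exact div_pos hx0 this
      · have h1 : N - x ≠ 0 := sub_ne_zero.mpr (ne_of_gt hxN)
        field_simp
        ring
  have hderiv : ∀ t ∈ Ioi (0:ℝ),
      HasDerivWithinAt (fun t : ℝ => N * t / (1 + t)) (N / (1 + t) ^ 2) (Ioi 0) t := by
    intro t ht
    have ht' : (0:ℝ) < t := ht
    have hu : (1:ℝ) + t ≠ 0 := by positivity
    have h1 : HasDerivAt (fun t : ℝ => N * t) N t := by
      simpa using (hasDerivAt_id t).const_mul N
    have h2 : HasDerivAt (fun t : ℝ => 1 + t) 1 t := by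
      simpa using (hasDerivAt_id t).const_add 1
    have h3 := h1.div h2 hu
    have : (N * (1 + t) - N * t * 1) / (1 + t) ^ 2 = N / (1 + t) ^ 2 := by ring_nf
    rw [this] at h3
    exact h3.hasDerivWithinAt
  have hinj : InjOn (fun t : ℝ => N * t / (1 + t)) (Ioi 0) := by
    intro s hs t ht h
    have hs' : (0:ℝ) < s := hs
    have ht' : (0:ℝ) < t := ht
    have hus : (1:ℝ) + s ≠ 0 := by positivity
    have hut : (1:ℝ) + t ≠ 0 := by positivity
    field_simp at h
    nlinarith [h]
  rw [← himg, integral_image_eq_integral_abs_deriv_smul measurableSet_Ioi hderiv hinj g]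

lemma aux_integrand {N c0 : ℝ} (a C : ℝ) (hN : 0 < N) (t : ℝ) (ht : 0 < t) :
    |N / (1 + t) ^ 2| • ((N * t / (1 + t)) * (C * N ^ 3 * (N * t / (1 + t)) ^ (a - 1) *
      (N - N * t / (1 + t)) ^ (-(a + 3)) *
      Real.exp (-c0 * (N * t / (1 + t)) / (N - N * t / (1 + t)))))
    = C * N * (t ^ ((a + 1) - 1) * Real.exp (-(c0 * t))
        + t ^ ((a + 2) - 1) * Real.exp (-(c0 * t))) := by
  have hu : (0:ℝ) < 1 + t := by linarith
  have e1 : N - N * t / (1 + t) = N / (1 + t) := by field_simp; ring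
  have e2 : -c0 * (N * t / (1 + t)) / (N / (1 + t)) = -(c0 * t) := by
    field_simp
  rw [e1, e2]
  have habs : |N / (1 + t) ^ 2| = N / (1 + t) ^ 2 := abs_of_pos (by positivity)
  rw [habs]
  have e3 : (N * t / (1 + t)) ^ (a - 1) = N ^ (a - 1) * t ^ (a - 1) / (1 + t) ^ (a - 1) := by
    rw [Real.div_rpow (by positivity) hu.le, Real.mul_rpow hN.le ht.le]
  have e4 : (N / (1 + t)) ^ (-(a + 3)) = (1 + t) ^ (a + 3) / N ^ (a + 3) := by
    rw [Real.rpow_neg (by positivity), Real.div_rpow hN.le hu.le, inv_div]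
  rw [e3, e4]
  have hN4 : N ^ (a + 3) = N ^ (a - 1) * N ^ (4:ℕ) := by
    rw [show a + 3 = (a - 1) + ((4:ℕ):ℝ) by push_cast; ring, Real.rpow_add hN,
      Real.rpow_natCast]
  have hu4 : (1 + t) ^ (a + 3) = (1 + t) ^ (a - 1) * (1 + t) ^ (4:ℕ) := by
    rw [show a + 3 = (a - 1) + ((4:ℕ):ℝ) by push_cast; ring, Real.rpow_add hu,
      Real.rpow_natCast]
  have ht1 : t ^ ((a + 1) - 1) = t ^ (a - 1) * t := by
    rw [show (a + 1) - 1 = (a - 1) + 1 by ring, Real.rpow_add_one ht.ne']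
  have ht2 : t ^ ((a + 2) - 1) = t ^ (a - 1) * t ^ (2:ℕ) := by
    rw [show (a + 2) - 1 = (a - 1) + (2:ℕ) by push_cast; ring, Real.rpow_add ht,
      Real.rpow_natCast]
  rw [hN4, hu4, ht1, ht2, smul_eq_mul]
  have hX : (0:ℝ) < t ^ (a - 1) := Real.rpow_pos_of_pos ht _
  have hY : (0:ℝ) < N ^ (a - 1) := Real.rpow_pos_of_pos hN _
  have hU : (0:ℝ) < (1 + t) ^ (a - 1) := Real.rpow_pos_of_pos hu _
  field_simp

lemma aux_algebra {N c0 R0S R0D C : ℝ} (hN : 0 < N) (hc0 : 0 < c0) (hR : 1 < R0S)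
    (hR0DS : R0D = R0S + c0⁻¹) (hCpos : 0 < C)
    (hC : C⁻¹ = c0 ^ (-(c0 * (R0S - 1))) * (R0S ^ 2 + c0⁻¹ * (R0S - 1)) *
      Real.Gamma (c0 * (R0S - 1))) :
    C * N * ((1 / c0) ^ (c0 * (R0S - 1) + 1) * Real.Gamma (c0 * (R0S - 1) + 1)
      + (1 / c0) ^ (c0 * (R0S - 1) + 2) * Real.Gamma (c0 * (R0S - 1) + 2))
    = (1 - 1 / (R0D + 1 - R0D / R0S)) * N := by
  have ha : 0 < c0 * (R0S - 1) := by nlinarith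
  have hGpos : 0 < Real.Gamma (c0 * (R0S - 1)) := Real.Gamma_pos_of_pos ha
  have hG1 : Real.Gamma (c0 * (R0S - 1) + 1) = c0 * (R0S - 1) * Real.Gamma (c0 * (R0S - 1)) :=
    Real.Gamma_add_one ha.ne'
  have hG2 : Real.Gamma (c0 * (R0S - 1) + 2)
      = (c0 * (R0S - 1) + 1) * (c0 * (R0S - 1) * Real.Gamma (c0 * (R0S - 1))) := by
    rw [show c0 * (R0S - 1) + 2 = (c0 * (R0S - 1) + 1) + 1 by ring,
      Real.Gamma_add_one (by positivity), hG1]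
  have hPpos : 0 < c0 ^ (c0 * (R0S - 1)) := Real.rpow_pos_of_pos hc0 _
  have hp1 : (1 / c0) ^ (c0 * (R0S - 1) + 1) = (c0 ^ (c0 * (R0S - 1)))⁻¹ * c0⁻¹ := by
    rw [one_div, Real.inv_rpow hc0.le, Real.rpow_add_one hc0.ne', mul_inv]
  have hp2 : (1 / c0) ^ (c0 * (R0S - 1) + 2)
      = (c0 ^ (c0 * (R0S - 1)))⁻¹ * c0⁻¹ * c0⁻¹ := by
    rw [one_div, Real.inv_rpow hc0.le, show c0 * (R0S - 1) + 2 = (c0 * (R0S - 1) + 1) + 1 by ring,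
      Real.rpow_add_one hc0.ne', Real.rpow_add_one hc0.ne', mul_inv, mul_inv]
  have hDpos : 0 < R0S ^ 2 + c0⁻¹ * (R0S - 1) := by
    have : 0 < c0⁻¹ * (R0S - 1) := by
      apply mul_pos (inv_pos.mpr hc0); linarith
    nlinarith
  have hCval : C = ((c0 ^ (c0 * (R0S - 1)))⁻¹ * (R0S ^ 2 + c0⁻¹ * (R0S - 1)) *
      Real.Gamma (c0 * (R0S - 1)))⁻¹ := by
    rw [← Real.rpow_neg hc0.le, ← hC, inv_inv]
  have hR0Spos : 0 < R0S := by linarith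
  have hE : R0D + 1 - R0D / R0S = (R0S ^ 2 + c0⁻¹ * (R0S - 1)) / R0S := by
    rw [hR0DS]; field_simp; ring
  rw [hG1, hG2, hp1, hp2, hCval, hE]
  set P := c0 ^ (c0 * (R0S - 1)) with hPdef
  set G := Real.Gamma (c0 * (R0S - 1)) with hGdef
  have h1 : P ≠ 0 := hPpos.ne'
  have h2 : G ≠ 0 := hGpos.ne'
  have h3 : (R0S ^ 2 + c0⁻¹ * (R0S - 1)) ≠ 0 := hDpos.ne'
  have hc0' : c0 ≠ 0 := hc0.ne'
  have hR' : R0S ≠ 0 := hR0Spos.ne'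
  have hQpos : 0 < c0 * R0S ^ 2 + R0S - 1 := by nlinarith
  have hkey : R0S ^ 2 + c0⁻¹ * (R0S - 1) = (c0 * R0S ^ 2 + R0S - 1) / c0 := by
    field_simp; ring
  rw [hkey]
  have hQ : c0 * R0S ^ 2 + R0S - 1 ≠ 0 := hQpos.ne'
  field_simp
  have hQ' : -1 + R0S + R0S ^ 2 * c0 ≠ 0 := by
    have : (0:ℝ) < -1 + R0S + R0S ^ 2 * c0 := by linarith
    exact this.ne'
  ring_nf
  field_simp
  ring

/-- mean of the stationary distribution. -/
theorem mean_of_stationary_distribution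
    (N β μ γ σ : ℝ) (hN : 0 < N) (hβ : 0 < β) (hμ : 0 < μ) (hγ : 0 < γ) (hσ : 0 < σ)
    (R0D R0S c0 C : ℝ)
    (hR0D : R0D = β * N / (μ + γ))
    (hR0S : R0S = β * N / (μ + γ) - σ ^ 2 * N ^ 2 / (2 * (μ + γ)))
    (hc0 : c0 = 2 * (μ + γ) / (σ ^ 2 * N ^ 2))
    (hR : 1 < R0S)
    (hCpos : 0 < C)
    (hC : C⁻¹ = c0 ^ (-(c0 * (R0S - 1))) * (R0S ^ 2 + c0⁻¹ * (R0S - 1)) *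
      Real.Gamma (c0 * (R0S - 1)))
    (p : ℝ → ℝ)
    (hp : ∀ x, p x = C * N ^ 3 * x ^ (c0 * (R0S - 1) - 1) *
      (N - x) ^ (-(c0 * (R0S - 1) + 3)) * Real.exp (-c0 * x / (N - x)))
    (Istarσ : ℝ)
    (hIstarσ : Istarσ = (1 - 1 / (R0D + 1 - R0D / R0S)) * N) :
    ∫ x in (0:ℝ)..N, x * p x = Istarσ := by
  have hμγ : 0 < μ + γ := by linarith
  have hc0pos : 0 < c0 := by rw [hc0]; positivity
  have hR0DS : R0D = R0S + c0⁻¹ := by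
    rw [hR0D, hR0S, hc0, inv_div]; ring
  have hapos : 0 < c0 * (R0S - 1) := by nlinarith
  rw [intervalIntegral.integral_of_le hN.le, MeasureTheory.integral_Ioc_eq_integral_Ioo]
  rw [aux_change hN (fun x => x * p x)]
  have hcong : ∀ t ∈ Ioi (0:ℝ),
      (fun t => |N / (1 + t) ^ 2| • ((fun x => x * p x) (N * t / (1 + t)))) t
      = (fun t => C * N * (t ^ ((c0 * (R0S - 1) + 1) - 1) * Real.exp (-(c0 * t))
        + t ^ ((c0 * (R0S - 1) + 2) - 1) * Real.exp (-(c0 * t)))) t := by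
    intro t ht
    simp only
    rw [hp]
    exact aux_integrand (c0 * (R0S - 1)) C hN t ht
  rw [setIntegral_congr_fun measurableSet_Ioi hcong]
  rw [integral_const_mul]
  rw [integral_add (aux_integrable (by positivity) hc0pos)
    (aux_integrable (by positivity) hc0pos)]
  rw [Real.integral_rpow_mul_exp_neg_mul_Ioi (by positivity) hc0pos,
    Real.integral_rpow_mul_exp_neg_mul_Ioi (by positivity) hc0pos]
  rw [hIstarσ]
  exact aux_algebra hN hc0pos hR hR0DS hCpos hC
end

section
/- Variance of the stationary distribution: ∫₀^N x² p_σ^s(x) dx − (∫₀^N x p_σ^s(x) dx)² = (I^* − I^*(σ)) · I^*(σ), where I^* = (1 − 1/R₀ᴰ)N and I^*(σ) = (1 − 1/(R₀ᴰ + 1 − R₀ᴰ/R₀ˢ)) N. -/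
open Real MeasureTheory Filter Set Topology

lemma sis_image (N : ℝ) (hN : 0 < N) :
    (fun t : ℝ => N * t / (1 + t)) '' Ioi 0 = Ioo 0 N := by
  ext y
  constructor
  · rintro ⟨t, ht, rfl⟩
    simp only [mem_Ioi] at ht
    have h1 : (0:ℝ) < 1 + t := by linarith
    constructor
    · positivity
    · rw [div_lt_iff₀ h1]; nlinarith
  · rintro ⟨hy0, hyN⟩
    have h1 : 0 < N - y := by linarith
    refine ⟨y / (N - y), mem_Ioi.mpr (by positivity), ?_⟩
    have h2 : 1 + y / (N - y) = N / (N - y) := by field_simp; ring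
    show N * (y / (N - y)) / (1 + y / (N - y)) = y
    rw [h2]
    field_simp

lemma sis_cov (N : ℝ) (hN : 0 < N) (g : ℝ → ℝ) :
    ∫ x in Ioo (0:ℝ) N, g x = ∫ t in Ioi (0:ℝ), (N / (1 + t) ^ 2) * g (N * t / (1 + t)) := by
  rw [← sis_image N hN]
  rw [integral_image_eq_integral_abs_deriv_smul measurableSet_Ioi
    (f' := fun x => N / (1 + x) ^ 2) ?_ ?_ g]
  · refine setIntegral_congr_fun measurableSet_Ioi (fun t ht => ?_)
    simp only [mem_Ioi] at ht
    rw [smul_eq_mul, abs_of_pos (by positivity)]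
  · intro x hx
    simp only [mem_Ioi] at hx
    have h1 : (1:ℝ) + x ≠ 0 := by positivity
    have h2 := ((hasDerivAt_id x).const_mul N).div ((hasDerivAt_id x).const_add 1) h1
    have h3 : HasDerivAt (fun t : ℝ => N * t / (1 + t)) (N / (1 + x) ^ 2) x := by
      rw [show N / (1 + x) ^ 2 = (N * 1 * (1 + id x) - N * id x * 1) / (1 + id x) ^ 2 by
        simp only [id]; ring]
      exact h2
    exact h3.hasDerivWithinAt
  · intro u hu v hv h
    simp only [mem_Ioi] at hu hv
    simp only at h
    have h1 : (1:ℝ) + u ≠ 0 := by positivity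
    have h2 : (1:ℝ) + v ≠ 0 := by positivity
    rw [div_eq_div_iff h1 h2] at h
    have h3 : N * u = N * v := by nlinarith [h]
    exact mul_left_cancel₀ hN.ne' h3

lemma sis_point (N a c : ℝ) (hN : 0 < N) (t : ℝ) (ht : 0 < t) :
    (N / (1 + t) ^ 2) * (N ^ 3 * (N * t / (1 + t)) ^ (a - 1) *
      (N - N * t / (1 + t)) ^ (-(a + 3)) *
      Real.exp (-c * (N * t / (1 + t)) / (N - N * t / (1 + t))))
      = t ^ (a - 1) * (1 + t) ^ 2 * Real.exp (-(c * t)) := by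
  have hu : (0:ℝ) < 1 + t := by linarith
  have hNx : N - N * t / (1 + t) = N / (1 + t) := by field_simp; ring
  rw [hNx]
  have he : -c * (N * t / (1 + t)) / (N / (1 + t)) = -(c * t) := by
    field_simp
  rw [he]
  have h1 : (N * t / (1 + t)) ^ (a - 1) = N ^ (a - 1) * t ^ (a - 1) / (1 + t) ^ (a - 1) := by
    rw [Real.div_rpow (by positivity) hu.le, Real.mul_rpow hN.le ht.le]
  have h2 : (N / (1 + t)) ^ (-(a + 3)) = (1 + t) ^ (a + 3) / N ^ (a + 3) := by
    rw [Real.rpow_neg (by positivity), Real.div_rpow hN.le hu.le, inv_div]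
  rw [h1, h2]
  have hN4 : N ^ (a + 3) = N ^ (a - 1) * N ^ (4:ℕ) := by
    rw [← Real.rpow_natCast N 4, ← Real.rpow_add hN]; norm_num
    rw [show a - 1 + 4 = a + 3 by ring]
  have hu4 : (1 + t) ^ (a + 3) = (1 + t) ^ (a - 1) * (1 + t) ^ (4:ℕ) := by
    rw [← Real.rpow_natCast (1 + t) 4, ← Real.rpow_add hu]; norm_num
    rw [show a - 1 + 4 = a + 3 by ring]
  rw [hN4, hu4]
  have p1 : (0:ℝ) < N ^ (a - 1) := Real.rpow_pos_of_pos hN _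
  have p2 : (0:ℝ) < (1 + t) ^ (a - 1) := Real.rpow_pos_of_pos hu _
  field_simp

lemma sis_intexp (a c : ℝ) (ha : 0 < a) (hc : 0 < c) :
    ∫ t in Ioi (0:ℝ), t ^ a * Real.exp (-(c * t)) = (1 / c) ^ (a + 1) * Real.Gamma (a + 1) := by
  have h := Real.integral_rpow_mul_exp_neg_mul_Ioi (show 0 < a + 1 by linarith) hc
  rw [show a + 1 - 1 = a by ring] at h
  exact h

lemma sis_integrable (a c : ℝ) (ha : 0 < a) (hc : 0 < c) :
    IntegrableOn (fun t : ℝ => t ^ a * Real.exp (-(c * t))) (Ioi 0) := by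
  have h := integrableOn_rpow_mul_exp_neg_mul_rpow (s := a) (p := 1) (by linarith) zero_lt_one hc
  refine h.congr_fun (fun x hx => ?_) measurableSet_Ioi
  simp [Real.rpow_one, neg_mul]

lemma sis_m2 (N a c C : ℝ) (hN : 0 < N) (ha : 0 < a) (hc : 0 < c) :
    (∫ x in Ioo (0:ℝ) N, x ^ 2 * (C * N ^ 3 * x ^ (a - 1) * (N - x) ^ (-(a + 3)) *
      Real.exp (-c * x / (N - x))))
      = C * N ^ 2 * ((1 / c) ^ (a + 2) * Real.Gamma (a + 2)) := by
  rw [sis_cov N hN]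
  have h1 : ∀ t ∈ Ioi (0:ℝ),
      (N / (1 + t) ^ 2) * ((N * t / (1 + t)) ^ 2 * (C * N ^ 3 * (N * t / (1 + t)) ^ (a - 1) *
        (N - N * t / (1 + t)) ^ (-(a + 3)) *
        Real.exp (-c * (N * t / (1 + t)) / (N - N * t / (1 + t)))))
      = C * N ^ 2 * (t ^ (a + 1) * Real.exp (-(c * t))) := by
    intro t ht
    simp only [mem_Ioi] at ht
    have hu : (0:ℝ) < 1 + t := by linarith
    have key := sis_point N a c hN t ht
    calc (N / (1 + t) ^ 2) * ((N * t / (1 + t)) ^ 2 * (C * N ^ 3 * (N * t / (1 + t)) ^ (a - 1) *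
        (N - N * t / (1 + t)) ^ (-(a + 3)) *
        Real.exp (-c * (N * t / (1 + t)) / (N - N * t / (1 + t)))))
        = C * (N * t / (1 + t)) ^ 2 * ((N / (1 + t) ^ 2) * (N ^ 3 * (N * t / (1 + t)) ^ (a - 1) *
          (N - N * t / (1 + t)) ^ (-(a + 3)) *
          Real.exp (-c * (N * t / (1 + t)) / (N - N * t / (1 + t))))) := by ring
      _ = C * (N * t / (1 + t)) ^ 2 * (t ^ (a - 1) * (1 + t) ^ 2 * Real.exp (-(c * t))) := by
          rw [key]
      _ = C * N ^ 2 * (t ^ (a + 1) * Real.exp (-(c * t))) := by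
          rw [show t ^ (a + 1) = t ^ (a - 1) * t ^ (2:ℕ) by
            rw [← Real.rpow_natCast t 2, ← Real.rpow_add ht]; norm_num
            rw [show a - 1 + 2 = a + 1 by ring]]
          field_simp
  rw [setIntegral_congr_fun measurableSet_Ioi h1, MeasureTheory.integral_const_mul]
  rw [show a + 2 = (a + 1) + 1 by ring, ← sis_intexp (a + 1) c (by linarith) hc]

lemma sis_m1 (N a c C : ℝ) (hN : 0 < N) (ha : 0 < a) (hc : 0 < c) :
    (∫ x in Ioo (0:ℝ) N, x * (C * N ^ 3 * x ^ (a - 1) * (N - x) ^ (-(a + 3)) *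
      Real.exp (-c * x / (N - x))))
      = C * N * ((1 / c) ^ (a + 1) * Real.Gamma (a + 1) + (1 / c) ^ (a + 2) * Real.Gamma (a + 2)) := by
  rw [sis_cov N hN]
  have h1 : ∀ t ∈ Ioi (0:ℝ),
      (N / (1 + t) ^ 2) * ((N * t / (1 + t)) * (C * N ^ 3 * (N * t / (1 + t)) ^ (a - 1) *
        (N - N * t / (1 + t)) ^ (-(a + 3)) *
        Real.exp (-c * (N * t / (1 + t)) / (N - N * t / (1 + t)))))
      = C * N * (t ^ a * Real.exp (-(c * t)) + t ^ (a + 1) * Real.exp (-(c * t))) := by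
    intro t ht
    simp only [mem_Ioi] at ht
    have hu : (0:ℝ) < 1 + t := by linarith
    have key := sis_point N a c hN t ht
    calc (N / (1 + t) ^ 2) * ((N * t / (1 + t)) * (C * N ^ 3 * (N * t / (1 + t)) ^ (a - 1) *
        (N - N * t / (1 + t)) ^ (-(a + 3)) *
        Real.exp (-c * (N * t / (1 + t)) / (N - N * t / (1 + t)))))
        = C * (N * t / (1 + t)) * ((N / (1 + t) ^ 2) * (N ^ 3 * (N * t / (1 + t)) ^ (a - 1) *
          (N - N * t / (1 + t)) ^ (-(a + 3)) *
          Real.exp (-c * (N * t / (1 + t)) / (N - N * t / (1 + t))))) := by ring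
      _ = C * (N * t / (1 + t)) * (t ^ (a - 1) * (1 + t) ^ 2 * Real.exp (-(c * t))) := by
          rw [key]
      _ = C * N * (t ^ a * Real.exp (-(c * t)) + t ^ (a + 1) * Real.exp (-(c * t))) := by
          rw [show t ^ (a + 1) = t ^ (a - 1) * t ^ (2:ℕ) by
            rw [← Real.rpow_natCast t 2, ← Real.rpow_add ht]; norm_num
            rw [show a - 1 + 2 = a + 1 by ring]]
          rw [show t ^ a = t ^ (a - 1) * t ^ (1:ℕ) by
            rw [← Real.rpow_natCast t 1, ← Real.rpow_add ht]; norm_num]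
          field_simp
  rw [setIntegral_congr_fun measurableSet_Ioi h1, MeasureTheory.integral_const_mul]
  rw [integral_add (sis_integrable a c ha hc) (sis_integrable (a + 1) c (by linarith) hc)]
  rw [sis_intexp a c ha hc, sis_intexp (a + 1) c (by linarith) hc,
    show a + 1 + 1 = a + 2 by ring]

lemma alg_m1 (N c s X G : ℝ) (hX : X ≠ 0) (hG : G ≠ 0) (hc : 0 < c) (hs : 1 < s) :
    (X * (s ^ 2 + c⁻¹ * (s - 1)) * G)⁻¹ * N * (X * (1 / c) * (c * (s - 1) * G)
      + X * (1 / c) * (1 / c) * ((c * (s - 1) + 1) * (c * (s - 1) * G)))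
    = N * (s - 1) * (c * s + 1) / (c * s ^ 2 + s - 1) := by
  have h1 : c * s ^ 2 + s - 1 ≠ 0 := by nlinarith
  have hD : s ^ 2 + c⁻¹ * (s - 1) = (c * s ^ 2 + s - 1) / c := by
    field_simp; ring
  rw [hD, mul_inv, mul_inv, inv_div]
  field_simp
  ring

lemma alg_m2 (N c s X G : ℝ) (hX : X ≠ 0) (hG : G ≠ 0) (hc : 0 < c) (hs : 1 < s) :
    (X * (s ^ 2 + c⁻¹ * (s - 1)) * G)⁻¹ * N ^ 2 *
      (X * (1 / c) * (1 / c) * ((c * (s - 1) + 1) * (c * (s - 1) * G)))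
    = N ^ 2 * (s - 1) * (c * (s - 1) + 1) / (c * s ^ 2 + s - 1) := by
  have h1 : c * s ^ 2 + s - 1 ≠ 0 := by nlinarith
  have hD : s ^ 2 + c⁻¹ * (s - 1) = (c * s ^ 2 + s - 1) / c := by
    field_simp; ring
  rw [hD, mul_inv, mul_inv, inv_div]
  field_simp

lemma alg_fin (N r s : ℝ) (hrs : 0 < r - s) (hs : 1 < s) :
    N ^ 2 * (s - 1) * (r - 1) / (r * s - r + s) - (N * r * (s - 1) / (r * s - r + s)) ^ 2
      = ((1 - 1 / r) * N - (1 - 1 / (r + 1 - r / s)) * N) * ((1 - 1 / (r + 1 - r / s)) * N) := by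
  have hr : 1 < r := by linarith
  have hr0 : r ≠ 0 := by positivity
  have hs0 : s ≠ 0 := by positivity
  have hD : 0 < r * s - r + s := by nlinarith
  have hQ : r + 1 - r / s ≠ 0 := by
    have : r / s < r := div_lt_self (by linarith) hs
    have : 0 < r + 1 - r / s := by linarith
    exact this.ne'
  have hA : r + 1 - r / s = (r * s - r + s) / s := by field_simp; ring
  have h1 : 1 - 1 / (r + 1 - r / s) = (r * s - r + s - s) / (r * s - r + s) := by
    rw [hA, one_div_div, eq_div_iff hD.ne', sub_mul, one_mul,
      div_mul_cancel₀ _ hD.ne']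
  rw [h1]
  have h2 : 1 - 1 / r = (r - 1) / r := by field_simp
  rw [h2]
  field_simp [hD.ne']
  ring_nf
  field_simp
  ring

lemma alg_c2 (N r s : ℝ) (hrs : 0 < r - s) (hs : 1 < s) :
    N ^ 2 * (s - 1) * ((r - s)⁻¹ * (s - 1) + 1) / ((r - s)⁻¹ * s ^ 2 + s - 1)
      = N ^ 2 * (s - 1) * (r - 1) / (r * s - r + s) := by
  have hD : 0 < r * s - r + s := by nlinarith
  have hne : r - s ≠ 0 := hrs.ne'
  have h2 : (r - s)⁻¹ * s ^ 2 + s - 1 ≠ 0 := by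
    have : 0 < (r - s)⁻¹ * s ^ 2 := by positivity
    nlinarith
  have e1 : (r - s)⁻¹ * (s - 1) + 1 = (r - 1) / (r - s) := by field_simp; ring
  have e2 : (r - s)⁻¹ * s ^ 2 + s - 1 = (r * s - r + s) / (r - s) := by field_simp; ring
  rw [e1, e2, div_eq_div_iff (by rw [← e2]; exact h2) hD.ne']
  field_simp

lemma alg_c1 (N r s : ℝ) (hrs : 0 < r - s) (hs : 1 < s) :
    N * (s - 1) * ((r - s)⁻¹ * s + 1) / ((r - s)⁻¹ * s ^ 2 + s - 1)
      = N * r * (s - 1) / (r * s - r + s) := by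
  have hD : 0 < r * s - r + s := by nlinarith
  have hne : r - s ≠ 0 := hrs.ne'
  have h2 : (r - s)⁻¹ * s ^ 2 + s - 1 ≠ 0 := by
    have : 0 < (r - s)⁻¹ * s ^ 2 := by positivity
    nlinarith
  rw [div_eq_div_iff h2 hD.ne']
  field_simp
  ring

/-- variance of the stationary distribution. -/
theorem variance_of_stationary_distribution
    (N β μ γ σ : ℝ) (hN : 0 < N) (hβ : 0 < β) (hμ : 0 < μ) (hγ : 0 < γ) (hσ : 0 < σ)
    (R0D R0S c0 C : ℝ)
    (hR0D : R0D = β * N / (μ + γ))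
    (hR0S : R0S = β * N / (μ + γ) - σ ^ 2 * N ^ 2 / (2 * (μ + γ)))
    (hc0 : c0 = 2 * (μ + γ) / (σ ^ 2 * N ^ 2))
    (hR : 1 < R0S)
    (hCpos : 0 < C)
    (hC : C⁻¹ = c0 ^ (-(c0 * (R0S - 1))) * (R0S ^ 2 + c0⁻¹ * (R0S - 1)) *
      Real.Gamma (c0 * (R0S - 1)))
    (p : ℝ → ℝ)
    (hp : ∀ x, p x = C * N ^ 3 * x ^ (c0 * (R0S - 1) - 1) *
      (N - x) ^ (-(c0 * (R0S - 1) + 3)) * Real.exp (-c0 * x / (N - x)))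
    (Istar Istarσ : ℝ)
    (hIstar : Istar = (1 - 1 / R0D) * N)
    (hIstarσ : Istarσ = (1 - 1 / (R0D + 1 - R0D / R0S)) * N) :
    (∫ x in (0:ℝ)..N, x ^ 2 * p x) - (∫ x in (0:ℝ)..N, x * p x) ^ 2 =
      (Istar - Istarσ) * Istarσ := by
  have hμγ : 0 < μ + γ := by linarith
  have hc0pos : 0 < c0 := by rw [hc0]; positivity
  have ha : 0 < c0 * (R0S - 1) := by
    have : 0 < R0S - 1 := by linarith
    positivity
  have hE : c0⁻¹ = R0D - R0S := by
    rw [hc0, hR0D, hR0S]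
    field_simp
    ring
  have hrs : 0 < R0D - R0S := by rw [← hE]; positivity
  have hc0e : c0 = (R0D - R0S)⁻¹ := by rw [← hE, inv_inv]
  have hGpos : 0 < Real.Gamma (c0 * (R0S - 1)) := Real.Gamma_pos_of_pos ha
  have hXc : c0 ^ (-(c0 * (R0S - 1))) = (1 / c0) ^ (c0 * (R0S - 1)) := by
    rw [Real.rpow_neg hc0pos.le, one_div, Real.inv_rpow hc0pos.le]
  have hCeq : C = ((1 / c0) ^ (c0 * (R0S - 1)) * (R0S ^ 2 + c0⁻¹ * (R0S - 1)) *
      Real.Gamma (c0 * (R0S - 1)))⁻¹ := by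
    have h := congrArg Inv.inv hC
    rwa [inv_inv, hXc] at h
  have hGa1 : Real.Gamma (c0 * (R0S - 1) + 1) = c0 * (R0S - 1) * Real.Gamma (c0 * (R0S - 1)) :=
    Real.Gamma_add_one ha.ne'
  have hGa2 : Real.Gamma (c0 * (R0S - 1) + 2)
      = (c0 * (R0S - 1) + 1) * (c0 * (R0S - 1) * Real.Gamma (c0 * (R0S - 1))) := by
    rw [show c0 * (R0S - 1) + 2 = c0 * (R0S - 1) + 1 + 1 by ring,
      Real.Gamma_add_one (by positivity), hGa1]
  have hcinv : (0:ℝ) < 1 / c0 := by positivity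
  have hP1 : (1 / c0) ^ (c0 * (R0S - 1) + 1) = (1 / c0) ^ (c0 * (R0S - 1)) * (1 / c0) := by
    rw [Real.rpow_add hcinv, Real.rpow_one]
  have hP2 : (1 / c0) ^ (c0 * (R0S - 1) + 2)
      = (1 / c0) ^ (c0 * (R0S - 1)) * (1 / c0) * (1 / c0) := by
    rw [show c0 * (R0S - 1) + 2 = c0 * (R0S - 1) + 1 + 1 by ring,
      Real.rpow_add hcinv, Real.rpow_one, hP1]
  have hX : (0:ℝ) < (1 / c0) ^ (c0 * (R0S - 1)) := Real.rpow_pos_of_pos hcinv _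
  have hval1 : C * N * ((1 / c0) ^ (c0 * (R0S - 1) + 1) * Real.Gamma (c0 * (R0S - 1) + 1) +
      (1 / c0) ^ (c0 * (R0S - 1) + 2) * Real.Gamma (c0 * (R0S - 1) + 2))
      = N * R0D * (R0S - 1) / (R0D * R0S - R0D + R0S) := by
    rw [hGa1, hGa2, hP1, hP2, hCeq,
      alg_m1 N c0 R0S ((1 / c0) ^ (c0 * (R0S - 1))) (Real.Gamma (c0 * (R0S - 1)))
        hX.ne' hGpos.ne' hc0pos hR, hc0e]
    exact alg_c1 N R0D R0S hrs hR
  have hval2 : C * N ^ 2 * ((1 / c0) ^ (c0 * (R0S - 1) + 2) * Real.Gamma (c0 * (R0S - 1) + 2))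
      = N ^ 2 * (R0S - 1) * (R0D - 1) / (R0D * R0S - R0D + R0S) := by
    rw [hGa2, hP2, hCeq,
      alg_m2 N c0 R0S ((1 / c0) ^ (c0 * (R0S - 1))) (Real.Gamma (c0 * (R0S - 1)))
        hX.ne' hGpos.ne' hc0pos hR, hc0e]
    exact alg_c2 N R0D R0S hrs hR
  rw [intervalIntegral.integral_of_le hN.le, intervalIntegral.integral_of_le hN.le,
    MeasureTheory.integral_Ioc_eq_integral_Ioo, MeasureTheory.integral_Ioc_eq_integral_Ioo]
  simp only [hp]
  rw [sis_m2 N (c0 * (R0S - 1)) c0 C hN ha hc0pos,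
    sis_m1 N (c0 * (R0S - 1)) c0 C hN ha hc0pos, hval1, hval2, hIstar, hIstarσ]
  exact alg_fin N R0D R0S hrs hR
end

section
/- First moment identity for the invariant density: (βN − μ − γ) ∫₀^N x p_σ^s(x) dx = β ∫₀^N x² p_σ^s(x) dx. -/
open Real MeasureTheory Filter Set Topology

/-- first moment identity for the invariant density. -/
theorem first_moment_identity
    (N β μ γ σ : ℝ) (hN : 0 < N) (hβ : 0 < β) (hμ : 0 < μ) (hγ : 0 < γ) (hσ : 0 < σ)
    (R0S c0 C : ℝ)
    (hR0S : R0S = β * N / (μ + γ) - σ ^ 2 * N ^ 2 / (2 * (μ + γ)))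
    (hc0 : c0 = 2 * (μ + γ) / (σ ^ 2 * N ^ 2))
    (hR : 1 < R0S)
    (hCpos : 0 < C)
    (hC : C⁻¹ = c0 ^ (-(c0 * (R0S - 1))) * (R0S ^ 2 + c0⁻¹ * (R0S - 1)) *
      Real.Gamma (c0 * (R0S - 1)))
    (p : ℝ → ℝ)
    (hp : ∀ x, p x = C * N ^ 3 * x ^ (c0 * (R0S - 1) - 1) *
      (N - x) ^ (-(c0 * (R0S - 1) + 3)) * Real.exp (-c0 * x / (N - x))) :
    (β * N - μ - γ) * ∫ x in (0:ℝ)..N, x * p x = β * ∫ x in (0:ℝ)..N, x ^ 2 * p x := by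
  have hμγ : 0 < μ + γ := by linarith
  have hσN : (0:ℝ) < σ ^ 2 * N ^ 2 := by positivity
  set a : ℝ := c0 * (R0S - 1) with ha_def
  have hc0pos : 0 < c0 := by rw [hc0]; positivity
  have ha : 0 < a := mul_pos hc0pos (by linarith)
  have hne3 : -(a + 3) ≠ 0 := ne_of_lt (by linarith)
  -- the two key scalar identities
  have hA : σ ^ 2 / 2 * (a + 1) * N ^ 2 = β * N - μ - γ := by
    rw [ha_def, hR0S, hc0]; field_simp; ring
  have hB : σ ^ 2 / 2 * (a + 1) * N + σ ^ 2 / 2 * c0 * N = β := by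
    rw [ha_def, hR0S, hc0]; field_simp; ring
  -- the antiderivative
  set F : ℝ → ℝ := fun x =>
    σ ^ 2 / 2 * (C * N ^ 3) * (x ^ (a + 1) * ((N - x) ^ (-(a + 1)) *
      Real.exp (-c0 * x / (N - x)))) with hF_def
  -- derivative of F on the open interval
  have hderiv : ∀ x ∈ Ioo (0:ℝ) N,
      HasDerivAt F ((β * N - μ - γ) * (x * p x) - β * (x ^ 2 * p x)) x := by
    intro x hx
    obtain ⟨hx0, hxN⟩ := hx
    have hNx : 0 < N - x := sub_pos.2 hxN
    have hsub : HasDerivAt (fun y : ℝ => N - y) (-1) x := (hasDerivAt_id x).const_sub N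
    have h1 : HasDerivAt (fun y : ℝ => y ^ (a + 1)) ((a + 1) * x ^ (a + 1 - 1)) x :=
      Real.hasDerivAt_rpow_const (Or.inl hx0.ne')
    have h2 : HasDerivAt (fun y : ℝ => (N - y) ^ (-(a + 1)))
        (-1 * -(a + 1) * (N - x) ^ (-(a + 1) - 1)) x :=
      hsub.rpow_const (Or.inl hNx.ne')
    have hg : HasDerivAt (fun y : ℝ => -c0 * y / (N - y))
        ((-c0 * 1 * (N - x) - -c0 * x * -1) / (N - x) ^ 2) x :=
      ((hasDerivAt_id x).const_mul (-c0)).div hsub hNx.ne'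
    have h3 := hg.exp
    have hall := ((h1.mul (h2.mul h3)).const_mul (σ ^ 2 / 2 * (C * N ^ 3)))
    have e1 : x ^ (a + 1 - 1) = x ^ (a - 1) * x := by
      rw [show a + 1 - 1 = (a - 1) + 1 by ring, Real.rpow_add hx0, Real.rpow_one]
    have e2 : x ^ (a + 1) = x ^ (a - 1) * x * x := by
      rw [show a + 1 = (a - 1) + 1 + 1 by ring, Real.rpow_add hx0, Real.rpow_add hx0,
        Real.rpow_one]
    have e3 : (N - x) ^ (-(a + 1)) = (N - x) ^ (-(a + 3)) * (N - x) * (N - x) := by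
      rw [show -(a + 1) = (-(a + 3)) + 1 + 1 by ring, Real.rpow_add hNx, Real.rpow_add hNx,
        Real.rpow_one]
    have e4 : (N - x) ^ (-(a + 1) - 1) = (N - x) ^ (-(a + 3)) * (N - x) := by
      rw [show -(a + 1) - 1 = (-(a + 3)) + 1 by ring, Real.rpow_add hNx, Real.rpow_one]
    have hEq : σ ^ 2 / 2 * (C * N ^ 3) *
        ((a + 1) * x ^ (a + 1 - 1) * ((N - x) ^ (-(a + 1)) *
          Real.exp (-c0 * x / (N - x))) +
         x ^ (a + 1) * (-1 * -(a + 1) * (N - x) ^ (-(a + 1) - 1) *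
            Real.exp (-c0 * x / (N - x)) +
          (N - x) ^ (-(a + 1)) * (Real.exp (-c0 * x / (N - x)) *
            ((-c0 * 1 * (N - x) - -c0 * x * -1) / (N - x) ^ 2)))) =
        (β * N - μ - γ) * (x * p x) - β * (x ^ 2 * p x) := by
      rw [hp, e1, e2, e3, e4]
      set X := x ^ (a - 1)
      set Y := (N - x) ^ (-(a + 3))
      set E := Real.exp (-c0 * x / (N - x))
      field_simp
      linear_combination (2 * X * Y * E) * hA -
        (2 * X * Y * E * x) * hB
    exact hEq ▸ hall
  -- the key limit at N
  have limN : ∀ r : ℝ, Tendsto (fun x => (N - x) ^ (-r) * Real.exp (-c0 * x / (N - x)))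
      (𝓝[<] N) (𝓝 0) := by
    intro r
    have h1 : Tendsto (fun z : ℝ => z ^ r * Real.exp (-(c0 * N) * z) * Real.exp c0)
        atTop (𝓝 0) := by
      simpa using
        (tendsto_rpow_mul_exp_neg_mul_atTop_nhds_zero r (c0 * N)
          (by positivity)).mul_const (Real.exp c0)
    have hc : Tendsto (fun x : ℝ => N - x) (𝓝[<] N) (𝓝[>] 0) := by
      apply tendsto_nhdsWithin_of_tendsto_nhds_of_eventually_within
      · have : Tendsto (fun x : ℝ => N - x) (𝓝 N) (𝓝 (N - N)) :=
          (continuous_const.sub continuous_id).tendsto N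
        simpa using this.mono_left nhdsWithin_le_nhds
      · filter_upwards [self_mem_nhdsWithin] with x hx
        exact sub_pos.2 (mem_Iio.mp hx)
    have h2 : Tendsto (fun x : ℝ => (N - x)⁻¹) (𝓝[<] N) atTop :=
      tendsto_inv_nhdsGT_zero.comp hc
    refine (h1.comp h2).congr' ?_
    filter_upwards [self_mem_nhdsWithin] with x hx
    have ht : 0 < N - x := sub_pos.2 hx
    show ((N - x)⁻¹) ^ r * Real.exp (-(c0 * N) * (N - x)⁻¹) * Real.exp c0 =
      (N - x) ^ (-r) * Real.exp (-c0 * x / (N - x))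
    rw [Real.inv_rpow ht.le, ← Real.rpow_neg ht.le, mul_assoc, ← Real.exp_add]
    congr 1
    field_simp
    ring
  -- continuity of x * p x on [0, N]
  set g : ℝ → ℝ := fun x =>
    C * N ^ 3 * (x ^ a * ((N - x) ^ (-(a + 3)) * Real.exp (-c0 * x / (N - x)))) with hg_def
  have hEqOn : ∀ x ∈ Icc (0:ℝ) N, x * p x = g x := by
    intro x hx
    rcases eq_or_lt_of_le hx.1 with rfl | hx0
    · simp [hg_def, Real.zero_rpow ha.ne']
    rcases eq_or_lt_of_le hx.2 with rfl | hxN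
    · simp only [hp, hg_def, sub_self]
      rw [Real.zero_rpow hne3]
      ring
    · simp only [hp, hg_def]
      rw [show x ^ a = x ^ (a - 1) * x by
        have h := Real.rpow_add hx0 (a - 1) 1
        rw [Real.rpow_one] at h
        simpa using h]
      ring
  have hgcont : ContinuousOn g (Icc 0 N) := by
    intro x hx
    by_cases hxeq : x = N
    · subst hxeq
      rw [← continuousWithinAt_diff_self]
      have hsub : Icc (0:ℝ) x \ {x} ⊆ Iio x := fun y hy =>
        lt_of_le_of_ne hy.1.2 hy.2
      have hlim : Tendsto g (𝓝[<] x) (𝓝 (g x)) := by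
        have hxpow : Tendsto (fun y : ℝ => y ^ a) (𝓝[<] x) (𝓝 (x ^ a)) :=
          ((Real.continuousAt_rpow_const x a (Or.inr ha.le)).tendsto).mono_left
            nhdsWithin_le_nhds
        have h3 := (hxpow.mul (limN (a + 3))).const_mul (C * x ^ 3)
        have hgN : g x = C * x ^ 3 * (x ^ a * 0) := by
          rw [hg_def]
          simp only [sub_self]
          rw [Real.zero_rpow hne3]
          ring
        rw [hgN]
        exact h3
      exact hlim.mono_left (nhdsWithin_mono _ hsub)
    · have hxN : x < N := lt_of_le_of_ne hx.2 hxeq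
      have hNx : (0:ℝ) < N - x := sub_pos.2 hxN
      apply ContinuousAt.continuousWithinAt
      apply ContinuousAt.mul continuousAt_const
      apply ContinuousAt.mul
      · exact continuousAt_id.rpow_const (Or.inr ha.le)
      apply ContinuousAt.mul
      · exact (continuousAt_const.sub continuousAt_id).rpow_const (Or.inl hNx.ne')
      · exact Real.continuous_exp.continuousAt.comp
          ((continuousAt_const.mul continuousAt_id).div
            (continuousAt_const.sub continuousAt_id) hNx.ne')
  have hcont : ContinuousOn (fun x => x * p x) (Icc 0 N) := hgcont.congr hEqOn
  have hI1 : IntervalIntegrable (fun x => x * p x) volume 0 N := by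
    rw [← uIcc_of_le hN.le] at hcont
    exact hcont.intervalIntegrable
  have hI2 : IntervalIntegrable (fun x => x ^ 2 * p x) volume 0 N := by
    have : ContinuousOn (fun x => x ^ 2 * p x) (Icc 0 N) := by
      refine ((continuous_id.continuousOn).mul hcont).congr fun x _ => ?_
      show x ^ 2 * p x = x * (x * p x)
      ring
    rw [← uIcc_of_le hN.le] at this
    exact this.intervalIntegrable
  -- limits of F at the endpoints
  have hF0 : Tendsto F (𝓝[>] (0:ℝ)) (𝓝 0) := by
    have hca : ContinuousAt F 0 := by
      apply ContinuousAt.mul continuousAt_const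
      apply ContinuousAt.mul
      · exact continuousAt_id.rpow_const (Or.inr (by positivity))
      apply ContinuousAt.mul
      · exact (continuousAt_const.sub continuousAt_id).rpow_const
          (Or.inl (by simpa using hN.ne'))
      · exact Real.continuous_exp.continuousAt.comp
          ((continuousAt_const.mul continuousAt_id).div
            (continuousAt_const.sub continuousAt_id) (by simpa using hN.ne'))
    have hF0v : F 0 = 0 := by
      simp [hF_def, Real.zero_rpow (by positivity : a + 1 ≠ 0)]
    have h4 := hca.tendsto.mono_left (nhdsWithin_le_nhds (s := Ioi (0:ℝ)))
    rwa [hF0v] at h4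
  have hFN : Tendsto F (𝓝[<] N) (𝓝 0) := by
    have hxpow : Tendsto (fun y : ℝ => y ^ (a + 1)) (𝓝[<] N) (𝓝 (N ^ (a + 1))) :=
      ((Real.continuousAt_rpow_const N (a + 1) (Or.inl hN.ne')).tendsto).mono_left
        nhdsWithin_le_nhds
    have h3 := (hxpow.mul (limN (a + 1))).const_mul (σ ^ 2 / 2 * (C * N ^ 3))
    simpa [hF_def] using h3
  -- fundamental theorem of calculus
  have hint : IntervalIntegrable
      (fun x => (β * N - μ - γ) * (x * p x) - β * (x ^ 2 * p x)) volume 0 N :=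
    (hI1.const_mul _).sub (hI2.const_mul _)
  have key := intervalIntegral.integral_eq_sub_of_hasDerivAt_of_tendsto hN hderiv hint hF0 hFN
  rw [intervalIntegral.integral_sub (hI1.const_mul _) (hI2.const_mul _),
    intervalIntegral.integral_const_mul, intervalIntegral.integral_const_mul] at key
  have : (0:ℝ) - 0 = 0 := by ring
  rw [this] at key
  linarith
end

section
/- Profile of the invariant density when R₀ᴾ < 1 (small noise-corrected persistence number), part (a): if R₀ˢ > 1, R₀ᴾ < 1, and R₀ᴾ ≤ 4(√c₀ − 1)/c₀, then p_σ^s(x) → +∞ as x → 0 from the right, and p_σ^s is strictly decreasing on the open interval (0, N). -/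
open Real MeasureTheory Filter Set Topology

set_option maxHeartbeats 1000000 in
/-- profile of the invariant density when `R₀ᴾ < 1`, part (a). -/
theorem profile_R0P_lt_one_part_a
    (N β μ γ σ : ℝ) (hN : 0 < N) (hβ : 0 < β) (hμ : 0 < μ) (hγ : 0 < γ) (hσ : 0 < σ)
    (R0S R0P c0 C : ℝ)
    (hR0S : R0S = β * N / (μ + γ) - σ ^ 2 * N ^ 2 / (2 * (μ + γ)))
    (hR0P : R0P = (β * N - σ ^ 2 * N ^ 2) / (μ + γ))
    (hc0 : c0 = 2 * (μ + γ) / (σ ^ 2 * N ^ 2))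
    (hR : 1 < R0S)
    (hP : R0P < 1)
    (hPle : R0P ≤ 4 * (Real.sqrt c0 - 1) / c0)
    (hCpos : 0 < C)
    (hC : C⁻¹ = c0 ^ (-(c0 * (R0S - 1))) * (R0S ^ 2 + c0⁻¹ * (R0S - 1)) *
      Real.Gamma (c0 * (R0S - 1)))
    (p : ℝ → ℝ)
    (hp : ∀ x, p x = C * N ^ 3 * x ^ (c0 * (R0S - 1) - 1) *
      (N - x) ^ (-(c0 * (R0S - 1) + 3)) * Real.exp (-c0 * x / (N - x))) :
    Tendsto p (𝓝[>] (0:ℝ)) atTop ∧ StrictAntiOn p (Set.Ioo 0 N) := by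
  have hμγ : 0 < μ + γ := by linarith
  have hσN : 0 < σ ^ 2 * N ^ 2 := by positivity
  set a := c0 * (R0S - 1) with ha
  clear_value a
  have hc0pos : 0 < c0 := by rw [hc0]; positivity
  have ha0 : 0 < a := by rw [ha]; exact mul_pos hc0pos (by linarith)
  have hkey : a - 1 = c0 * (R0P - 1) := by
    rw [ha, hR0S, hR0P, hc0]
    field_simp
    ring
  have ha1 : a < 1 := by
    nlinarith [mul_pos hc0pos (show 0 < 1 - R0P by linarith)]
  set K := C * N ^ 3 with hK
  clear_value K
  have hKpos : 0 < K := by rw [hK]; positivity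
  set s := Real.sqrt c0 with hsdef
  clear_value s
  have hs2 : s ^ 2 = c0 := by rw [hsdef]; exact Real.sq_sqrt hc0pos.le
  have hs0 : 0 ≤ s := by rw [hsdef]; exact Real.sqrt_nonneg _
  rw [le_div_iff₀ hc0pos] at hPle
  have hale : a ≤ 4 * s - 3 - c0 := by nlinarith [hkey, hPle]
  have hdisc : (5 - a - c0) ^ 2 ≤ 16 * (1 - a) := by
    have hu : 0 ≤ 4 * s - 3 - c0 - a := by linarith
    have h8s : 4 * s - 3 - c0 - a ≤ 8 * s := by nlinarith
    nlinarith [mul_nonneg hu (show (0:ℝ) ≤ 8 * s - (4 * s - 3 - c0 - a) by linarith)]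
  set xs := N * (5 - a - c0) / 8 with hxs
  clear_value xs
  have hfneg : ∀ x : ℝ, x ≠ xs → (a - 1) * (N - x) ^ 2 + (a + 3) * x * (N - x) - c0 * N * x < 0 := by
    intro x hx
    have h2 : 0 < (x - xs) ^ 2 := by
      have hne : x - xs ≠ 0 := sub_ne_zero.2 hx
      positivity
    have hd := mul_le_mul_of_nonneg_right hdisc (sq_nonneg N)
    have hG : 16 * ((a - 1) * (N - x) ^ 2 + (a + 3) * x * (N - x) - c0 * N * x)
        = -64 * (x - xs) ^ 2 + ((5 - a - c0) ^ 2 * N ^ 2 - 16 * (1 - a) * N ^ 2) := by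
      rw [hxs]; ring
    linarith
  -- derivative
  have hderiv : ∀ x ∈ Set.Ioo (0:ℝ) N, HasDerivAt p
      (p x * ((a - 1) / x + (a + 3) / (N - x) - c0 * N / (N - x) ^ 2)) x := by
    rintro x ⟨hx0, hxN⟩
    have hNx : 0 < N - x := by linarith
    have hA : HasDerivAt (fun t : ℝ => t ^ (a - 1)) ((a - 1) * x ^ (a - 1 - 1)) x :=
      Real.hasDerivAt_rpow_const (Or.inl hx0.ne')
    have hu : HasDerivAt (fun t : ℝ => N - t) (-1) x := by
      simpa using (hasDerivAt_id x).const_sub N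
    have hB : HasDerivAt (fun t : ℝ => (N - t) ^ (-(a + 3)))
        ((-(a + 3)) * (N - x) ^ (-(a + 3) - 1) * (-1)) x :=
      (Real.hasDerivAt_rpow_const (Or.inl hNx.ne')).comp x hu
    have hq := ((hasDerivAt_id x).const_mul (-c0)).div hu hNx.ne'
    simp only [id_eq] at hq
    have hE := hq.exp
    have hprod := (hA.mul (hB.mul hE)).const_mul K
    have hpg : p =ᶠ[nhds x]
        (fun t => K * (t ^ (a - 1) * ((N - t) ^ (-(a + 3)) * Real.exp (-c0 * t / (N - t))))) :=
      Filter.Eventually.of_forall (fun t => by rw [hp t, hK]; ring)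
    have hP' := hprod.congr_of_eventuallyEq hpg
    refine hP'.congr_deriv ?_
    symm
    simp only [Pi.mul_apply, Pi.div_apply]
    rw [hp x, hK, Real.rpow_sub_one hx0.ne' (a - 1), Real.rpow_sub_one hNx.ne' (-(a + 3))]
    generalize Real.exp (-c0 * x / (N - x)) = E
    generalize (N - x) ^ (-(a + 3)) = B
    generalize x ^ (a - 1) = A
    field_simp
    ring
  have hppos : ∀ x ∈ Set.Ioo (0:ℝ) N, 0 < p x := by
    rintro x ⟨hx0, hxN⟩
    have hNx : 0 < N - x := by linarith
    rw [hp x]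
    positivity
  -- strict antitonicity helper
  have hanti : ∀ u v : ℝ, u ∈ Set.Ioo (0:ℝ) N → v ∈ Set.Ioo (0:ℝ) N →
      (∀ z ∈ Set.Ioo u v, z ≠ xs) → u < v → p v < p u := by
    intro u v hu hv hz huv
    have hsub : Set.Icc u v ⊆ Set.Ioo (0:ℝ) N := Set.Icc_subset_Ioo hu.1 hv.2
    have hcont : ContinuousOn p (Set.Icc u v) := fun z hz' =>
      ((hderiv z (hsub hz')).continuousAt).continuousWithinAt
    refine strictAntiOn_of_deriv_neg (convex_Icc u v) hcont ?_
      (Set.left_mem_Icc.2 huv.le) (Set.right_mem_Icc.2 huv.le) huv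
    intro z hzI
    rw [interior_Icc] at hzI
    have hzIoo : z ∈ Set.Ioo (0:ℝ) N := hsub (Set.Ioo_subset_Icc_self hzI)
    rw [(hderiv z hzIoo).deriv]
    apply mul_neg_of_pos_of_neg (hppos z hzIoo)
    obtain ⟨hz0, hzN⟩ := hzIoo
    have hNz : 0 < N - z := by linarith
    have hf := hfneg z (hz z hzI)
    have hrw : (a - 1) / z + (a + 3) / (N - z) - c0 * N / (N - z) ^ 2
        = ((a - 1) * (N - z) ^ 2 + (a + 3) * z * (N - z) - c0 * N * z) / (z * (N - z) ^ 2) := by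
      field_simp
    rw [hrw]
    exact div_neg_of_neg_of_pos hf (by positivity)
  constructor
  · -- tendsto atTop
    have h2 : Tendsto (fun x : ℝ => (x⁻¹) ^ (1 - a)) (𝓝[>] (0:ℝ)) atTop :=
      (tendsto_rpow_atTop (by linarith)).comp tendsto_inv_nhdsGT_zero
    have h1 : Tendsto (fun x : ℝ => x ^ (a - 1)) (𝓝[>] (0:ℝ)) atTop := by
      refine h2.congr' ?_
      filter_upwards [self_mem_nhdsWithin] with x hx
      rw [Set.mem_Ioi] at hx
      rw [Real.inv_rpow hx.le, ← Real.rpow_neg hx.le]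
      norm_num
    have hrest : Tendsto (fun x : ℝ => K * ((N - x) ^ (-(a + 3)) * Real.exp (-c0 * x / (N - x))))
        (𝓝[>] (0:ℝ)) (𝓝 (K * (N ^ (-(a + 3)) * Real.exp 0))) := by
      apply Tendsto.mono_left _ nhdsWithin_le_nhds
      have hc : ContinuousAt
          (fun x : ℝ => K * ((N - x) ^ (-(a + 3)) * Real.exp (-c0 * x / (N - x)))) 0 := by
        apply continuousAt_const.mul
        apply ContinuousAt.mul
        · exact (continuousAt_const.sub continuousAt_id).rpow_const
            (Or.inl (by simpa using hN.ne'))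
        · exact (Real.continuous_exp.continuousAt).comp
            (((continuousAt_const.mul continuousAt_id)).div
              (continuousAt_const.sub continuousAt_id) (by simpa using hN.ne'))
      have := hc.tendsto
      simpa using this
    have hpos : 0 < K * (N ^ (-(a + 3)) * Real.exp 0) :=
      mul_pos hKpos (mul_pos (Real.rpow_pos_of_pos hN _) (Real.exp_pos _))
    have hmul := h1.atTop_mul_pos hpos hrest
    refine hmul.congr fun x => ?_
    rw [hp x, hK]
    ring
  · intro x hx y hy hxy
    by_cases hmem : xs ∈ Set.Ioo x y
    · have hxsm : xs ∈ Set.Ioo (0:ℝ) N := ⟨lt_trans hx.1 hmem.1, lt_trans hmem.2 hy.2⟩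
      have h1 := hanti x xs hx hxsm (fun z hzI => ne_of_lt hzI.2) hmem.1
      have h2 := hanti xs y hxsm hy (fun z hzI => ne_of_gt hzI.1) hmem.2
      linarith
    · exact hanti x y hx hy (fun z hzI hzeq => hmem (hzeq ▸ hzI)) hxy
end

section
/- Profile of the invariant density when R₀ᴾ = 1: if R₀ˢ > 1 and R₀ᴾ = 1, then p_σ^s(x) → C/N as x → 0 from the right; moreover, (a) if c₀ ≥ 4 then p_σ^s is strictly decreasing on (0, N), while (b) if c₀ < 4 then p_σ^s is strictly increasing on (0, (1 − c₀/4)N) and strictly decreasing on ((1 − c₀/4)N, N). -/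
open Real MeasureTheory Filter Set Topology

private lemma qDeriv (K c0 N x : ℝ) (hx : x < N) :
    HasDerivAt (fun y => K * Real.exp (Real.log (N - y) * (-4) + -c0 * y / (N - y)))
      (K * Real.exp (Real.log (N - x) * (-4) + -c0 * x / (N - x)) *
        ((4 * (N - x) - c0 * N) / (N - x) ^ 2)) x := by
  have hpos : 0 < N - x := by linarith
  have h1 : HasDerivAt (fun y : ℝ => N - y) (-1) x := by
    simpa using (hasDerivAt_id x).const_sub N
  have h2 : HasDerivAt (fun y => Real.log (N - y)) (-1 / (N - x)) x := h1.log hpos.ne'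
  have h2' : HasDerivAt (fun y => Real.log (N - y) * (-4)) (-1 / (N - x) * (-4)) x :=
    h2.mul_const (-4)
  have h3 : HasDerivAt (fun y : ℝ => -c0 * y) (-c0) x := by
    simpa using (hasDerivAt_id x).const_mul (-c0)
  have h4 : HasDerivAt (fun y : ℝ => -c0 * y / (N - y))
      ((-c0 * (N - x) - -c0 * x * (-1)) / (N - x) ^ 2) x := h3.div h1 hpos.ne'
  have h5 := ((h2'.add h4).exp).const_mul K
  convert h5 using 1
  · rfl
  · rfl
  · rfl
  simp only [Pi.add_apply]
  generalize Real.exp _ = E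
  field_simp
  ring

private lemma qMono (K c0 N a b : ℝ) (hK : 0 < K) (hb : b ≤ N)
    (hsign : ∀ x ∈ Set.Ioo a b, 0 < 4 * (N - x) - c0 * N) :
    StrictMonoOn (fun y => K * Real.exp (Real.log (N - y) * (-4) + -c0 * y / (N - y)))
      (Set.Ioo a b) := by
  apply strictMonoOn_of_deriv_pos (convex_Ioo a b)
  · intro x hx
    exact (qDeriv K c0 N x (lt_of_lt_of_le hx.2 hb)).differentiableAt.continuousAt.continuousWithinAt
  · intro x hx
    rw [interior_Ioo] at hx
    have hxN : x < N := lt_of_lt_of_le hx.2 hb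
    rw [(qDeriv K c0 N x hxN).deriv]
    have hpos : 0 < N - x := by linarith
    have := hsign x hx
    positivity

private lemma qAnti (K c0 N a b : ℝ) (hK : 0 < K) (hb : b ≤ N)
    (hsign : ∀ x ∈ Set.Ioo a b, 4 * (N - x) - c0 * N < 0) :
    StrictAntiOn (fun y => K * Real.exp (Real.log (N - y) * (-4) + -c0 * y / (N - y)))
      (Set.Ioo a b) := by
  apply strictAntiOn_of_deriv_neg (convex_Ioo a b)
  · intro x hx
    exact (qDeriv K c0 N x (lt_of_lt_of_le hx.2 hb)).differentiableAt.continuousAt.continuousWithinAt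
  · intro x hx
    rw [interior_Ioo] at hx
    have hxN : x < N := lt_of_lt_of_le hx.2 hb
    rw [(qDeriv K c0 N x hxN).deriv]
    have hpos : 0 < N - x := by linarith
    have hneg := hsign x hx
    have hE : 0 < K * Real.exp (Real.log (N - x) * (-4) + -c0 * x / (N - x)) := by positivity
    have : (4 * (N - x) - c0 * N) / (N - x) ^ 2 < 0 := div_neg_of_neg_of_pos hneg (by positivity)
    exact mul_neg_of_pos_of_neg hE this

/-- profile of the invariant density when `R₀ᴾ = 1`. -/
theorem profile_R0P_eq_one
    (N β μ γ σ : ℝ) (hN : 0 < N) (hβ : 0 < β) (hμ : 0 < μ) (hγ : 0 < γ) (hσ : 0 < σ)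
    (R0S R0P c0 C : ℝ)
    (hR0S : R0S = β * N / (μ + γ) - σ ^ 2 * N ^ 2 / (2 * (μ + γ)))
    (hR0P : R0P = (β * N - σ ^ 2 * N ^ 2) / (μ + γ))
    (hc0 : c0 = 2 * (μ + γ) / (σ ^ 2 * N ^ 2))
    (hR : 1 < R0S)
    (hP : R0P = 1)
    (hCpos : 0 < C)
    (hC : C⁻¹ = c0 ^ (-(c0 * (R0S - 1))) * (R0S ^ 2 + c0⁻¹ * (R0S - 1)) *
      Real.Gamma (c0 * (R0S - 1)))
    (p : ℝ → ℝ)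
    (hp : ∀ x, p x = C * N ^ 3 * x ^ (c0 * (R0S - 1) - 1) *
      (N - x) ^ (-(c0 * (R0S - 1) + 3)) * Real.exp (-c0 * x / (N - x))) :
    Tendsto p (𝓝[>] (0:ℝ)) (𝓝 (C / N)) ∧
    (4 ≤ c0 → StrictAntiOn p (Set.Ioo 0 N)) ∧
    (c0 < 4 → StrictMonoOn p (Set.Ioo 0 ((1 - c0 / 4) * N)) ∧
      StrictAntiOn p (Set.Ioo ((1 - c0 / 4) * N) N)) := by
  have hμγ : 0 < μ + γ := by linarith
  have hσN : 0 < σ ^ 2 * N ^ 2 := by positivity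
  have hc0pos : 0 < c0 := by rw [hc0]; positivity
  have hβN : β * N = μ + γ + σ ^ 2 * N ^ 2 := by
    rw [hR0P] at hP
    field_simp at hP
    linarith
  have hone : c0 * (R0S - 1) = 1 := by
    rw [hc0, hR0S, hβN]
    field_simp
    ring
  set K := C * N ^ 3 with hK
  have hKpos : 0 < K := by positivity
  set q : ℝ → ℝ := fun y => K * Real.exp (Real.log (N - y) * (-4) + -c0 * y / (N - y)) with hq
  have hpq : ∀ x, x < N → p x = q x := by
    intro x hx
    have hpos : 0 < N - x := by linarith
    have e1 : c0 * (R0S - 1) - 1 = 0 := by rw [hone]; ring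
    have e2 : -(c0 * (R0S - 1) + 3) = (-4 : ℝ) := by rw [hone]; ring
    rw [hp, e1, e2, Real.rpow_zero, mul_one, Real.rpow_def_of_pos hpos, hq]
    rw [mul_assoc, ← Real.exp_add]
  have hq0 : q 0 = C / N := by
    have he : Real.exp (Real.log N * (-4)) = (N ^ (4:ℕ))⁻¹ := by
      rw [← Real.rpow_def_of_pos hN, show ((-4:ℝ)) = -((4:ℕ):ℝ) by norm_num,
        Real.rpow_neg hN.le, Real.rpow_natCast]
    rw [hq]
    simp only [sub_zero, mul_zero, zero_div, add_zero, zero_mul]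
    rw [he, hK]
    field_simp
  have hcontq : ContinuousAt q 0 := (qDeriv K c0 N 0 hN).differentiableAt.continuousAt
  have hev : p =ᶠ[𝓝[>] (0:ℝ)] q := by
    filter_upwards [nhdsWithin_le_nhds (Iio_mem_nhds hN)] with x hx
    exact hpq x hx
  refine ⟨?_, ?_, ?_⟩
  · rw [← hq0]
    exact (hcontq.tendsto.mono_left nhdsWithin_le_nhds).congr' hev.symm
  · intro h4
    have hqa : StrictAntiOn q (Set.Ioo 0 N) := by
      apply qAnti K c0 N 0 N hKpos le_rfl
      intro x hx
      nlinarith [hx.1]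
    intro x hx y hy hxy
    rw [hpq x hx.2, hpq y hy.2]
    exact hqa hx hy hxy
  · intro h4
    have hbN : (1 - c0 / 4) * N ≤ N := by nlinarith
    constructor
    · have hqm : StrictMonoOn q (Set.Ioo 0 ((1 - c0 / 4) * N)) := by
        apply qMono K c0 N 0 _ hKpos hbN
        intro x hx
        nlinarith [hx.2]
      intro x hx y hy hxy
      rw [hpq x (lt_of_lt_of_le hx.2 hbN), hpq y (lt_of_lt_of_le hy.2 hbN)]
      exact hqm hx hy hxy
    · have hqa : StrictAntiOn q (Set.Ioo ((1 - c0 / 4) * N) N) := by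
        apply qAnti K c0 N _ N hKpos le_rfl
        intro x hx
        nlinarith [hx.1]
      intro x hx y hy hxy
      rw [hpq x hx.2, hpq y hy.2]
      exact hqa hx hy hxy
end

section
/- Profile of the invariant density when R₀ᴾ > 1: if R₀ᴾ > 1 (which implies R₀ˢ > 1), then p_σ^s(x) → 0 as x → 0 from the right, and p_σ^s is strictly increasing on (0, I_*(σ)) and strictly decreasing on (I_*(σ), N); in particular p_σ^s attains its maximum over (0,N) at I_*(σ), where I_*(σ) = (N/8)[(4 − R₀ᴾc₀) + √((4 + R₀ᴾc₀)² − 16c₀)]. -/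
open Real MeasureTheory Filter Set Topology

/-- profile of the invariant density when `R₀ᴾ > 1`. -/
theorem profile_R0P_gt_one
    (N β μ γ σ : ℝ) (hN : 0 < N) (hβ : 0 < β) (hμ : 0 < μ) (hγ : 0 < γ) (hσ : 0 < σ)
    (R0S R0P c0 C : ℝ)
    (hR0S : R0S = β * N / (μ + γ) - σ ^ 2 * N ^ 2 / (2 * (μ + γ)))
    (hR0P : R0P = (β * N - σ ^ 2 * N ^ 2) / (μ + γ))
    (hc0 : c0 = 2 * (μ + γ) / (σ ^ 2 * N ^ 2))
    (hP : 1 < R0P)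
    (hCpos : 0 < C)
    (hC : C⁻¹ = c0 ^ (-(c0 * (R0S - 1))) * (R0S ^ 2 + c0⁻¹ * (R0S - 1)) *
      Real.Gamma (c0 * (R0S - 1)))
    (p : ℝ → ℝ)
    (hp : ∀ x, p x = C * N ^ 3 * x ^ (c0 * (R0S - 1) - 1) *
      (N - x) ^ (-(c0 * (R0S - 1) + 3)) * Real.exp (-c0 * x / (N - x)))
    (Istarσ : ℝ)
    (hIstarσ : Istarσ = N / 8 * ((4 - R0P * c0) + Real.sqrt ((4 + R0P * c0) ^ 2 - 16 * c0))) :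
    Tendsto p (𝓝[>] (0:ℝ)) (𝓝 0) ∧
    StrictMonoOn p (Set.Ioo 0 Istarσ) ∧
    StrictAntiOn p (Set.Ioo Istarσ N) ∧
    ∀ x ∈ Set.Ioo (0:ℝ) N, p x ≤ p Istarσ := by
  have hμγ : 0 < μ + γ := by linarith
  have hσN : 0 < σ ^ 2 * N ^ 2 := by positivity
  have hc0pos : 0 < c0 := by rw [hc0]; positivity
  set a : ℝ := c0 * (R0S - 1) with ha_def
  have hkey : a = c0 * (R0P - 1) + 1 := by
    rw [ha_def, hR0S, hR0P, hc0]; field_simp; ring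
  have ha1 : (0:ℝ) < a - 1 := by
    rw [hkey]
    have : 0 < c0 * (R0P - 1) := mul_pos hc0pos (by linarith)
    linarith
  -- abbreviations for the quadratic/root analysis
  set t : ℝ := R0P * c0 with ht_def
  have htpos : 0 < t := mul_pos (by linarith) hc0pos
  set s : ℝ := Real.sqrt ((4 + t) ^ 2 - 16 * c0) with hs_def
  have hDalt : (4 + t) ^ 2 - 16 * c0 = (4 - t) ^ 2 + 16 * (c0 * (R0P - 1)) := by
    rw [ht_def]; ring
  have hcR : 0 < c0 * (R0P - 1) := mul_pos hc0pos (by linarith)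
  have hDpos : 0 < (4 + t) ^ 2 - 16 * c0 := by
    rw [hDalt]; positivity
  have hs_nonneg : 0 ≤ s := Real.sqrt_nonneg _
  have hs2 : s ^ 2 = (4 + t) ^ 2 - 16 * c0 := Real.sq_sqrt hDpos.le
  have hsq : (4 - t) ^ 2 < s ^ 2 := by rw [hs2, hDalt]; linarith
  have hsu : 4 - t < s :=
    lt_of_pow_lt_pow_left₀ 2 hs_nonneg hsq
  have hsu' : -(4 - t) < s :=
    lt_of_pow_lt_pow_left₀ 2 hs_nonneg (by rw [neg_pow]; simpa using hsq)
  have hslt : s < 4 + t := by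
    have h1 : s ^ 2 < (4 + t) ^ 2 := by rw [hs2]; linarith
    exact lt_of_pow_lt_pow_left₀ 2 (by linarith) h1
  have hI0 : 0 < Istarσ := by
    rw [hIstarσ]; have : 0 < 4 - t + s := by linarith
    positivity
  have hIN : Istarσ < N := by
    rw [hIstarσ]
    have h8 : 4 - t + s < 8 := by linarith
    calc N / 8 * (4 - t + s) < N / 8 * 8 := by
          apply mul_lt_mul_of_pos_left h8 (by positivity)
      _ = N := by ring
  -- the quadratic f and its root
  set f : ℝ → ℝ := fun x => -4 * x ^ 2 + N * (4 - t) * x + c0 * (R0P - 1) * N ^ 2 with hf_def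
  have hfI : f Istarσ = 0 := by
    simp only [hf_def, hIstarσ]
    linear_combination (-(N^2/16)) * hs2 + (-(N^2)) * ht_def
  have hfactor : ∀ x : ℝ, f x = (Istarσ - x) * (4 * (x + Istarσ) - N * (4 - t)) := by
    intro x
    have h1 : f Istarσ = 0 := hfI
    simp only [hf_def] at h1 ⊢
    linear_combination h1
  have h4I : 0 < 4 * Istarσ - N * (4 - t) := by
    rw [hIstarσ]
    have : 4 * (N / 8 * (4 - t + s)) - N * (4 - t) = N / 2 * (s - (4 - t)) := by ring
    rw [this]; have : 0 < s - (4 - t) := by linarith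
    positivity
  have hfpos : ∀ x ∈ Set.Ioo (0:ℝ) Istarσ, 0 < f x := by
    intro x hx
    rw [hfactor x]
    apply mul_pos (by linarith [hx.2])
    have : 4 * (x + Istarσ) - N * (4 - t) = 4 * x + (4 * Istarσ - N * (4 - t)) := by ring
    rw [this]; linarith [hx.1]
  have hfneg : ∀ x ∈ Set.Ioo Istarσ N, f x < 0 := by
    intro x hx
    rw [hfactor x]
    apply mul_neg_of_neg_of_pos (by linarith [hx.1])
    have : 4 * (x + Istarσ) - N * (4 - t) = 4 * x + (4 * Istarσ - N * (4 - t)) := by ring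
    rw [this]; have : 0 < x := lt_trans hI0 hx.1
    linarith
  -- log-density h and representation of p
  set K : ℝ := C * N ^ 3 with hK_def
  have hKpos : 0 < K := by rw [hK_def]; positivity
  set h : ℝ → ℝ := fun x => (a - 1) * Real.log x - (a + 3) * Real.log (N - x)
      - c0 * x / (N - x) with hh_def
  have hpeq : ∀ x ∈ Set.Ioo (0:ℝ) N, p x = K * Real.exp (h x) := by
    intro x hx
    have hx0 : 0 < x := hx.1
    have hNx : 0 < N - x := by linarith [hx.2]
    rw [hp x, hh_def]
    rw [Real.rpow_def_of_pos hx0, Real.rpow_def_of_pos hNx, hK_def]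
    simp only []
    rw [show (a - 1) * Real.log x - (a + 3) * Real.log (N - x) - c0 * x / (N - x)
      = (Real.log x * (a - 1)) + ((Real.log (N - x) * -(a + 3)) + (-c0 * x / (N - x))) by ring,
      Real.exp_add, Real.exp_add]
    ring
  -- derivative of h
  set D : ℝ → ℝ := fun x => (a - 1) / x + (a + 3) / (N - x) - c0 * N / (N - x) ^ 2
    with hD_def
  have hhderiv : ∀ x ∈ Set.Ioo (0:ℝ) N, HasDerivAt h (D x) x := by
    intro x hx
    have hx0 : 0 < x := hx.1
    have hNx : 0 < N - x := by linarith [hx.2]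
    have d1 : HasDerivAt (fun y : ℝ => (a - 1) * Real.log y) ((a - 1) * x⁻¹) x :=
      (Real.hasDerivAt_log hx0.ne').const_mul _
    have dsub : HasDerivAt (fun y : ℝ => N - y) (-1) x := by
      simpa using (hasDerivAt_const x N).fun_sub (hasDerivAt_id x)
    have d2 : HasDerivAt (fun y : ℝ => (a + 3) * Real.log (N - y))
        ((a + 3) * ((N - x)⁻¹ * -1)) x :=
      (((Real.hasDerivAt_log hNx.ne').comp x dsub)).const_mul _
    have d3 : HasDerivAt (fun y : ℝ => c0 * y / (N - y))
        ((c0 * (N - x) - c0 * x * -1) / (N - x) ^ 2) x := by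
      simpa using ((hasDerivAt_id x).const_mul c0).fun_div dsub hNx.ne'
    have := (d1.fun_sub d2).fun_sub d3
    refine this.congr_deriv ?_
    rw [hD_def]
    field_simp
    ring
  -- p is continuous on (0, N) and has positive/negative derivative
  have hderivp : ∀ x ∈ Set.Ioo (0:ℝ) N, deriv p x = K * Real.exp (h x) * D x := by
    intro x hx
    have hmem : Set.Ioo (0:ℝ) N ∈ 𝓝 x := (isOpen_Ioo).mem_nhds hx
    have heq : p =ᶠ[𝓝 x] fun y => K * Real.exp (h y) :=
      Filter.eventuallyEq_of_mem hmem hpeq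
    rw [heq.deriv_eq, (((hhderiv x hx).exp.const_mul K)).deriv]
    ring
  have hcontp : ContinuousOn p (Set.Ioo 0 N) := by
    intro x hx
    have hmem : Set.Ioo (0:ℝ) N ∈ 𝓝 x := (isOpen_Ioo).mem_nhds hx
    have heq : (fun y => K * Real.exp (h y)) =ᶠ[𝓝 x] p :=
      (Filter.eventuallyEq_of_mem hmem hpeq).symm
    exact (ContinuousAt.congr (((hhderiv x hx).exp.const_mul K)).continuousAt heq).continuousWithinAt
  -- monotone on Ioc 0 Istar
  have hsub1 : Set.Ioc (0:ℝ) Istarσ ⊆ Set.Ioo 0 N := fun y hy =>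
    ⟨hy.1, lt_of_le_of_lt hy.2 hIN⟩
  have hsub2 : Set.Ico Istarσ N ⊆ Set.Ioo 0 N := fun y hy =>
    ⟨lt_of_lt_of_le hI0 hy.1, hy.2⟩
  have hDrepr : ∀ x ∈ Set.Ioo (0:ℝ) N, D x = f x / (x * (N - x) ^ 2) := by
    intro x hx
    have hx0 : x ≠ 0 := hx.1.ne'
    have hNx : N - x ≠ 0 := (by linarith [hx.2] : (0:ℝ) < N - x).ne'
    simp only [hD_def, hf_def]
    rw [hkey, ht_def]
    field_simp
    ring
  have hmono : StrictMonoOn p (Set.Ioc 0 Istarσ) := by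
    apply strictMonoOn_of_deriv_pos (convex_Ioc _ _) (hcontp.mono hsub1)
    intro x hx
    rw [interior_Ioc] at hx
    have hx' : x ∈ Set.Ioo (0:ℝ) N := ⟨hx.1, lt_trans hx.2 hIN⟩
    rw [hderivp x hx']
    have hNx : 0 < N - x := by linarith [hx'.2]
    have hDx : 0 < D x := by
      rw [hDrepr x hx']
      exact div_pos (hfpos x hx) (mul_pos hx.1 (pow_pos hNx 2))
    exact mul_pos (mul_pos hKpos (Real.exp_pos _)) hDx
  have hanti : StrictAntiOn p (Set.Ico Istarσ N) := by
    apply strictAntiOn_of_deriv_neg (convex_Ico _ _) (hcontp.mono hsub2)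
    intro x hx
    rw [interior_Ico] at hx
    have hx' : x ∈ Set.Ioo (0:ℝ) N := ⟨lt_trans hI0 hx.1, hx.2⟩
    rw [hderivp x hx']
    have hNx : 0 < N - x := by linarith [hx'.2]
    have hDx : D x < 0 := by
      rw [hDrepr x hx']
      exact div_neg_of_neg_of_pos (hfneg x hx) (mul_pos hx'.1 (pow_pos hNx 2))
    exact mul_neg_of_pos_of_neg (mul_pos hKpos (Real.exp_pos _)) hDx
  -- Part 1: tendsto 0
  have hT : Tendsto p (𝓝[>] (0:ℝ)) (𝓝 0) := by
    have hpfun : p = fun x => C * N ^ 3 * x ^ (a - 1) *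
        (N - x) ^ (-(a + 3)) * Real.exp (-c0 * x / (N - x)) := funext hp
    rw [hpfun]
    have T1 : Tendsto (fun x : ℝ => x ^ (a - 1)) (𝓝 (0:ℝ)) (𝓝 0) := by
      have := (Real.continuousAt_rpow_const 0 (a - 1) (Or.inr ha1.le)).tendsto
      simpa [Real.zero_rpow (ne_of_gt ha1)] using this
    have T2 : Tendsto (fun x : ℝ => (N - x) ^ (-(a + 3))) (𝓝 (0:ℝ))
        (𝓝 (N ^ (-(a + 3)))) := by
      have hcont : ContinuousAt (fun x : ℝ => (N - x) ^ (-(a + 3))) 0 := by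
        apply ContinuousAt.comp (x := (0:ℝ))
          (Real.continuousAt_rpow_const (N - 0) (-(a + 3)) (Or.inl (by simpa using hN.ne')))
        exact (continuous_const.sub continuous_id).continuousAt
      simpa using hcont.tendsto
    have T3 : Tendsto (fun x : ℝ => Real.exp (-c0 * x / (N - x))) (𝓝 (0:ℝ))
        (𝓝 1) := by
      have hcont : ContinuousAt (fun x : ℝ => Real.exp (-c0 * x / (N - x))) 0 := by
        apply Real.continuous_exp.continuousAt.comp
        exact ((continuous_const.mul continuous_id).continuousAt).div
          (continuous_const.sub continuous_id).continuousAt (by simpa using hN.ne')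
      have : Real.exp (-c0 * 0 / (N - 0)) = 1 := by simp
      simpa [this] using hcont.tendsto
    have := ((tendsto_const_nhds (x := C * N ^ 3)).mul T1).mul T2 |>.mul T3
    simp only [mul_zero, zero_mul] at this
    exact this.mono_left nhdsWithin_le_nhds
  refine ⟨hT, hmono.mono (Set.Ioo_subset_Ioc_self), hanti.mono (Set.Ioo_subset_Ico_self), ?_⟩
  intro x hx
  rcases lt_trichotomy x Istarσ with hlt | heq | hgt
  · exact (hmono ⟨hx.1, hlt.le⟩ ⟨hI0, le_refl _⟩ hlt).le
  · rw [heq]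
  · exact (hanti ⟨le_refl _, hIN⟩ ⟨hgt.le, hx.2⟩ hgt).le
end

section
/- Disease prevalence comparison: assume R₀ᴾ > 1. Then (1) if R₀ᴰ < 2 then I_*(σ)/N < I^*/N; (2) if R₀ᴰ = 2 then I_*(σ)/N = I^*/N; (3) if R₀ᴰ > 2 then I_*(σ)/N > I^*/N. Here I_*(σ)/N is the stochastic disease prevalence and I^*/N the deterministic disease prevalence. -/
open Real MeasureTheory Filter Set Topology

set_option maxHeartbeats 1000000 in
/-- comparison of the stochastic and deterministic disease prevalences. -/
theorem disease_prevalence_comparison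
    (N β μ γ σ : ℝ) (hN : 0 < N) (hβ : 0 < β) (hμ : 0 < μ) (hγ : 0 < γ) (hσ : 0 < σ)
    (R0D R0P c0 : ℝ)
    (hR0D : R0D = β * N / (μ + γ))
    (hR0P : R0P = (β * N - σ ^ 2 * N ^ 2) / (μ + γ))
    (hc0 : c0 = 2 * (μ + γ) / (σ ^ 2 * N ^ 2))
    (hP : 1 < R0P)
    (Istarσ Istar : ℝ)
    (hIstarσ : Istarσ = N / 8 * ((4 - R0P * c0) + Real.sqrt ((4 + R0P * c0) ^ 2 - 16 * c0)))
    (hIstar : Istar = (1 - 1 / R0D) * N) :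
    (R0D < 2 → Istarσ / N < Istar / N) ∧
    (R0D = 2 → Istarσ / N = Istar / N) ∧
    (2 < R0D → Istar / N < Istarσ / N) := by
  set a : ℝ := μ + γ with ha_def
  set s : ℝ := σ ^ 2 * N ^ 2 with hs_def
  set b : ℝ := β * N with hb_def
  have ha : 0 < a := by positivity
  have hs : 0 < s := by positivity
  have hb : 0 < b := by positivity
  -- from hP : 1 < (b - s)/a, get a + s < b
  have hba : a + s < b := by
    rw [hR0P, lt_div_iff₀ ha] at hP
    linarith
  set T : ℝ := (b + s) ^ 2 - 8 * a * s with hT_def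
  have hTnn : 0 ≤ T := by nlinarith [sq_nonneg (a - 2 * s), sq_nonneg (b - a - s)]
  have harg : (4 + R0P * c0) ^ 2 - 16 * c0 = (2 / s) ^ 2 * T := by
    rw [hR0P, hc0, hT_def]
    field_simp
    ring
  set r : ℝ := Real.sqrt T with hr_def
  have hr0 : 0 ≤ r := Real.sqrt_nonneg T
  have hr2 : r ^ 2 = T := Real.sq_sqrt hTnn
  have hsqrt : Real.sqrt ((4 + R0P * c0) ^ 2 - 16 * c0) = (2 / s) * r := by
    rw [harg, Real.sqrt_mul (sq_nonneg _), Real.sqrt_sq (by positivity : (0:ℝ) ≤ 2 / s)]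
  have hIσN : Istarσ / N = (3 * s - b + r) / (4 * s) := by
    rw [hIstarσ, hsqrt, hR0P, hc0]
    field_simp
    ring
  have hIN : Istar / N = (b - a) / b := by
    rw [hIstar, hR0D]
    field_simp
  clear_value r T b s a
  have hRHS : 0 < b ^ 2 + b * s - 4 * a * s := by
    nlinarith [mul_pos (show (0:ℝ) < b - a - s by linarith)
      (show (0:ℝ) < b + a + 2 * s by linarith), sq_nonneg (2 * a - s)]
  rw [hIσN, hIN]
  have hR0D2lt : R0D < 2 ↔ b < 2 * a := by rw [hR0D, div_lt_iff₀ ha]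
  have hR0D2eq : R0D = 2 ↔ b = 2 * a := by rw [hR0D, div_eq_iff ha.ne']
  have hR0D2gt : 2 < R0D ↔ 2 * a < b := by rw [hR0D, lt_div_iff₀ ha]
  refine ⟨fun h => ?_, fun h => ?_, fun h => ?_⟩
  · rw [hR0D2lt] at h
    rw [div_lt_div_iff₀ (by positivity) hb]
    -- need (3s - b + r) * b < (b - a) * (4s), i.e. b*r < b^2 + bs - 4as
    have key : b ^ 2 * r ^ 2 < (b ^ 2 + b * s - 4 * a * s) ^ 2 := by
      rw [hr2, hT_def]
      nlinarith [mul_pos (mul_pos ha (mul_pos hs hs)) (show (0:ℝ) < 2 * a - b by linarith)]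
    nlinarith [key, mul_nonneg hb.le hr0, hRHS, mul_pos hb hs]
  · rw [hR0D2eq] at h
    have hTsq : T = (b - s) ^ 2 := by rw [hT_def, h]; ring
    have hfac : (r - (b - s)) * (r + (b - s)) = 0 := by
      linear_combination hr2 + hTsq
    have hrval : r = b - s := by
      rcases mul_eq_zero.1 hfac with h1 | h1
      · linarith
      · nlinarith
    rw [hrval, div_eq_div_iff (by positivity) hb.ne', h]
    ring
  · rw [hR0D2gt] at h
    rw [div_lt_div_iff₀ hb (by positivity)]
    have key : (b ^ 2 + b * s - 4 * a * s) ^ 2 < b ^ 2 * r ^ 2 := by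
      rw [hr2, hT_def]
      nlinarith [mul_pos (mul_pos ha (mul_pos hs hs)) (show (0:ℝ) < b - 2 * a by linarith)]
    nlinarith [key, mul_nonneg hb.le hr0, hRHS, mul_pos hb hs]
end

section
/- Comparison of the mode I_*(σ) with the persistence level Ĩ_*(σ): assume R₀ᴾ > 1. Then (a) Ĩ_*(σ) > I_*(σ) if (10/3)c₀⁻¹ < R₀ᴰ < 3/2 + (2/3)c₀⁻¹; (b) Ĩ_*(σ) = I_*(σ) if R₀ᴰ = 3/2 + (2/3)c₀⁻¹; (c) Ĩ_*(σ) < I_*(σ) if 1 + 2c₀⁻¹ < R₀ᴰ ≤ (10/3)c₀⁻¹. -/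
open Real MeasureTheory Filter Set Topology

set_option maxHeartbeats 1600000 in
lemma aux_mode_persist (a b m X Y : ℝ) (hm : 0 < m) (hb : 0 < b) (hab : b + m < a)
    (hX : 0 ≤ X) (hY : 0 ≤ Y)
    (hX2 : X ^ 2 = a ^ 2 - 2 * b * m) (hY2 : Y ^ 2 = (a + b) ^ 2 - 8 * m * b) :
    (6 * a < 9 * m + 2 * b → Y + 3 * a - b < 4 * X) ∧
    (6 * a = 9 * m + 2 * b → 4 * X = Y + 3 * a - b) ∧
    (9 * m + 2 * b < 6 * a → 4 * X < Y + 3 * a - b) := by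
  have h3ab : 0 < 3 * a - b := by linarith
  have hR : 0 < (3 * a - b) * (a + b) - 12 * m * b := by
    nlinarith [sq_nonneg (2 * b - m), mul_pos hm hm,
      mul_pos (show (0:ℝ) < a - (b + m) by linarith) (show (0:ℝ) < 3 * a + 5 * b + 3 * m by linarith)]
  have hY2' : ((3 * a - b) * Y) ^ 2 = (3 * a - b) ^ 2 * ((a + b) ^ 2 - 8 * m * b) := by
    rw [mul_pow, hY2]
  have hLnn : 0 ≤ (3 * a - b) * Y := mul_nonneg h3ab.le hY
  refine ⟨?_, ?_, ?_⟩
  · intro h6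
    have hL : (3 * a - b) * Y < (3 * a - b) * (a + b) - 12 * m * b := by
      nlinarith [hY2', hR, hLnn,
        mul_pos (mul_pos hm (mul_pos hb hb)) (show (0:ℝ) < 9 * m + 2 * b - 6 * a by linarith)]
    nlinarith [hX2, hY2, hL, h3ab, hX, hY,
      mul_nonneg (show (0:ℝ) ≤ Y + 3 * a - b by linarith) (show (0:ℝ) ≤ Y + 3 * a - b + 8 * X by linarith)]
  · intro h6
    have hz : m * b ^ 2 * (9 * m + 2 * b - 6 * a) = 0 := by
      rw [show 9 * m + 2 * b - 6 * a = 0 by linarith]; ring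
    have hLle : (3 * a - b) * Y ≤ (3 * a - b) * (a + b) - 12 * m * b := by
      nlinarith [hY2', hR, hLnn, hz]
    have hLge : (3 * a - b) * (a + b) - 12 * m * b ≤ (3 * a - b) * Y := by
      nlinarith [hY2', hR, hLnn, hz]
    have hL : (3 * a - b) * Y = (3 * a - b) * (a + b) - 12 * m * b := le_antisymm hLle hLge
    have h1 : 4 * X ≤ Y + 3 * a - b := by
      nlinarith [hX2, hY2, hL, hX, hY, h3ab,
        mul_nonneg (show (0:ℝ) ≤ Y + 3 * a - b by linarith) (show (0:ℝ) ≤ Y + 3 * a - b + 8 * X by linarith)]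
    have h2 : Y + 3 * a - b ≤ 4 * X := by
      nlinarith [hX2, hY2, hL, hX, hY, h3ab,
        mul_nonneg (show (0:ℝ) ≤ 4 * X by linarith) (show (0:ℝ) ≤ 4 * X + 2 * (Y + 3 * a - b) by linarith)]
    linarith
  · intro h6
    have hL : (3 * a - b) * (a + b) - 12 * m * b < (3 * a - b) * Y := by
      nlinarith [hY2', hR, hLnn,
        mul_pos (mul_pos hm (mul_pos hb hb)) (show (0:ℝ) < 6 * a - 9 * m - 2 * b by linarith)]
    nlinarith [hX2, hY2, hL, h3ab, hX, hY,
      mul_nonneg (show (0:ℝ) ≤ 4 * X by linarith) (show (0:ℝ) ≤ 4 * X + 2 * (Y + 3 * a - b) by linarith)]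

set_option maxHeartbeats 1600000 in
/-- comparison of the mode `I_*(σ)` with the persistence level `Ĩ_*(σ)`. -/
theorem mode_vs_persistence_level
    (N β μ γ σ : ℝ) (hN : 0 < N) (hβ : 0 < β) (hμ : 0 < μ) (hγ : 0 < γ) (hσ : 0 < σ)
    (R0D R0P c0 : ℝ)
    (hR0D : R0D = β * N / (μ + γ))
    (hR0P : R0P = (β * N - σ ^ 2 * N ^ 2) / (μ + γ))
    (hc0 : c0 = 2 * (μ + γ) / (σ ^ 2 * N ^ 2))
    (hP : 1 < R0P)
    (Istarσ Itildeσ : ℝ)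
    (hIstarσ : Istarσ = N / 8 * ((4 - R0P * c0) + Real.sqrt ((4 + R0P * c0) ^ 2 - 16 * c0)))
    (hItildeσ : Itildeσ = (1 / σ ^ 2) *
      (Real.sqrt (β ^ 2 - 2 * σ ^ 2 * (μ + γ)) - (β - σ ^ 2 * N))) :
    ((10 / 3) * c0⁻¹ < R0D ∧ R0D < 3 / 2 + (2 / 3) * c0⁻¹ → Istarσ < Itildeσ) ∧
    (R0D = 3 / 2 + (2 / 3) * c0⁻¹ → Itildeσ = Istarσ) ∧
    (1 + 2 * c0⁻¹ < R0D ∧ R0D ≤ (10 / 3) * c0⁻¹ → Itildeσ < Istarσ) := by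
  obtain ⟨m, hmdef⟩ : ∃ m : ℝ, m = μ + γ := ⟨_, rfl⟩
  obtain ⟨a, hadef⟩ : ∃ a : ℝ, a = β * N := ⟨_, rfl⟩
  obtain ⟨b, hbdef⟩ : ∃ b : ℝ, b = σ ^ 2 * N ^ 2 := ⟨_, rfl⟩
  rw [← hmdef, ← hadef] at hR0D
  rw [← hmdef, ← hadef, ← hbdef] at hR0P
  rw [← hmdef, ← hbdef] at hc0
  rw [← hmdef] at hItildeσ
  have hm : 0 < m := by rw [hmdef]; positivity
  have ha : 0 < a := by rw [hadef]; positivity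
  have hb : 0 < b := by rw [hbdef]; positivity
  have hmne : m ≠ 0 := hm.ne'
  have hbne : b ≠ 0 := hb.ne'
  have hNne : N ≠ 0 := hN.ne'
  have hab : b + m < a := by
    rw [hR0P, lt_div_iff₀ hm] at hP
    linarith
  obtain ⟨X, hXdef⟩ : ∃ X : ℝ, X = Real.sqrt (a ^ 2 - 2 * b * m) := ⟨_, rfl⟩
  obtain ⟨Y, hYdef⟩ : ∃ Y : ℝ, Y = Real.sqrt ((a + b) ^ 2 - 8 * m * b) := ⟨_, rfl⟩
  have hXpos : 0 < a ^ 2 - 2 * b * m := by nlinarith [sq_nonneg (b - m), mul_pos hb hm]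
  have hYpos : 0 < (a + b) ^ 2 - 8 * m * b := by
    nlinarith [sq_nonneg (m - 2 * b),
      mul_pos (show (0:ℝ) < a - b - m by linarith) (show (0:ℝ) < a + 3 * b + m by linarith)]
  have hX : 0 ≤ X := hXdef ▸ Real.sqrt_nonneg _
  have hY : 0 ≤ Y := hYdef ▸ Real.sqrt_nonneg _
  have hX2 : X ^ 2 = a ^ 2 - 2 * b * m := by rw [hXdef]; exact Real.sq_sqrt hXpos.le
  have hY2 : Y ^ 2 = (a + b) ^ 2 - 8 * m * b := by rw [hYdef]; exact Real.sq_sqrt hYpos.le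
  -- rewrite Istarσ
  have hsq1 : Real.sqrt ((4 + R0P * c0) ^ 2 - 16 * c0) = (2 / b) * Y := by
    have key : (4 + R0P * c0) ^ 2 - 16 * c0 = (2 / b) ^ 2 * ((a + b) ^ 2 - 8 * m * b) := by
      rw [hR0P, hc0]
      field_simp
      ring
    rw [key, Real.sqrt_mul (by positivity), Real.sqrt_sq (by positivity), ← hYdef]
  have hIs : Istarσ * (4 * b) = N * ((3 * b - a) + Y) := by
    rw [hIstarσ, hsq1, hR0P, hc0]
    field_simp
    ring
  -- rewrite Itildeσ
  have hsq2 : Real.sqrt (β ^ 2 - 2 * σ ^ 2 * m) = (1 / N) * X := by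
    have key : β ^ 2 - 2 * σ ^ 2 * m = (1 / N) ^ 2 * (a ^ 2 - 2 * b * m) := by
      rw [hadef, hbdef]
      field_simp
    rw [key, Real.sqrt_mul (by positivity), Real.sqrt_sq (by positivity), ← hXdef]
  have hIt : Itildeσ * (4 * b) = N * (4 * X + 4 * b - 4 * a) := by
    have hσne : (σ : ℝ) ≠ 0 := hσ.ne'
    rw [hItildeσ, hsq2, hadef, hbdef]
    field_simp
    ring
  have hc0inv : c0⁻¹ = b / (2 * m) := by rw [hc0, inv_div]
  have h4b : (0:ℝ) < 4 * b := by linarith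
  obtain ⟨hA, hB, hC⟩ := aux_mode_persist a b m X Y hm hb hab hX hY hX2 hY2
  refine ⟨?_, ?_, ?_⟩
  · rintro ⟨-, h2⟩
    rw [hR0D, hc0inv, div_lt_iff₀ hm] at h2
    have h6 : 6 * a < 9 * m + 2 * b := by
      have e : (3 / 2 + 2 / 3 * (b / (2 * m))) * m = 3 / 2 * m + b / 3 := by
        field_simp
      rw [e] at h2; linarith
    have hxy := hA h6
    have hlt : N * ((3 * b - a) + Y) < N * (4 * X + 4 * b - 4 * a) := by
      nlinarith [mul_pos hN (show (0:ℝ) < 4 * X - (Y + 3 * a - b) by linarith)]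
    rw [← hIs, ← hIt] at hlt
    exact lt_of_mul_lt_mul_right hlt h4b.le
  · intro h2
    rw [hR0D, hc0inv] at h2
    have h6 : 6 * a = 9 * m + 2 * b := by
      field_simp at h2
      have h2' : (6 * a) * (2 * m) = (9 * m + 2 * b) * (2 * m) := by
        have h2'' : 6 * a = 9 * m + 2 * b := by linarith
        rw [h2'']
      exact mul_right_cancel₀ (by positivity) h2'
    have hXY := hB h6
    have heq : Itildeσ * (4 * b) = Istarσ * (4 * b) := by
      rw [hIs, hIt, hXY]; ring
    exact mul_right_cancel₀ h4b.ne' heq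
  · rintro ⟨h1, h2⟩
    rw [hR0D, hc0inv, lt_div_iff₀ hm] at h1
    rw [hR0D, hc0inv, div_le_iff₀ hm] at h2
    have hmb : m < 2 / 3 * b := by
      have e : 10 / 3 * (b / (2 * m)) * m = 5 / 3 * b := by field_simp; ring
      rw [e] at h2
      linarith
    have h6 : 9 * m + 2 * b < 6 * a := by linarith
    have hxy := hC h6
    have hlt : N * (4 * X + 4 * b - 4 * a) < N * ((3 * b - a) + Y) := by
      nlinarith [mul_pos hN (show (0:ℝ) < (Y + 3 * a - b) - 4 * X by linarith)]
    rw [← hIs, ← hIt] at hlt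
    exact lt_of_mul_lt_mul_right hlt h4b.le
end

section
/- Small-noise limits of the two persistence levels: fix N, β, μ, γ > 0 with R₀ᴰ = βN/(μ+γ) > 1. Then, as σ → 0⁺, both Ĩ_*(σ) → I^* and I_*(σ) → I^*, where I^* = (1 − 1/R₀ᴰ)N (note that R₀ᴾ > 1 holds for all sufficiently small σ > 0, so I_*(σ) and Ĩ_*(σ) are well defined there). -/
open Real MeasureTheory Filter Set Topology

set_option maxHeartbeats 1000000 in
/-- small-noise limits of the two persistence levels. -/
theorem small_noise_limits_of_persistence_levels
    (N β μ γ : ℝ) (hN : 0 < N) (hβ : 0 < β) (hμ : 0 < μ) (hγ : 0 < γ)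
    (R0D : ℝ) (hR0D : R0D = β * N / (μ + γ)) (hR : 1 < R0D)
    (Istar : ℝ) (hIstar : Istar = (1 - 1 / R0D) * N) :
    Tendsto (fun σ : ℝ => (1 / σ ^ 2) *
        (Real.sqrt (β ^ 2 - 2 * σ ^ 2 * (μ + γ)) - (β - σ ^ 2 * N)))
      (𝓝[>] 0) (𝓝 Istar) ∧
    Tendsto (fun σ : ℝ => N / 8 *
        ((4 - ((β * N - σ ^ 2 * N ^ 2) / (μ + γ)) * (2 * (μ + γ) / (σ ^ 2 * N ^ 2))) +
          Real.sqrt ((4 + ((β * N - σ ^ 2 * N ^ 2) / (μ + γ)) *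
            (2 * (μ + γ) / (σ ^ 2 * N ^ 2))) ^ 2 - 16 * (2 * (μ + γ) / (σ ^ 2 * N ^ 2)))))
      (𝓝[>] 0) (𝓝 Istar) := by
  have hk : (0:ℝ) < μ + γ := by linarith
  have hIstar' : Istar = N - (μ + γ) / β := by
    rw [hIstar, hR0D]; field_simp
  constructor
  · -- First limit
    set F : ℝ → ℝ := fun σ => N - 2 * (μ + γ) / (Real.sqrt (β ^ 2 - 2 * σ ^ 2 * (μ + γ)) + β)
      with hF
    have hFlim : Tendsto F (𝓝[>] (0:ℝ)) (𝓝 Istar) := by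
      have hc : Continuous fun σ : ℝ => Real.sqrt (β ^ 2 - 2 * σ ^ 2 * (μ + γ)) + β := by
        continuity
      have h0 : Real.sqrt (β ^ 2 - 2 * (0:ℝ) ^ 2 * (μ + γ)) + β = 2 * β := by
        norm_num [Real.sqrt_sq hβ.le]; ring
      have hden : Tendsto (fun σ : ℝ => Real.sqrt (β ^ 2 - 2 * σ ^ 2 * (μ + γ)) + β)
          (𝓝 0) (𝓝 (2 * β)) := by
        have h := hc.tendsto 0
        rwa [h0] at h
      have hlim := (tendsto_const_nhds (x := N)).sub
        ((tendsto_const_nhds (x := 2 * (μ + γ))).div hden (by positivity))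
      have heq : N - 2 * (μ + γ) / (2 * β) = Istar := by
        rw [hIstar']; field_simp
      exact (heq ▸ hlim).mono_left nhdsWithin_le_nhds
    refine hFlim.congr' ?_
    set δ : ℝ := β / Real.sqrt (2 * (μ + γ)) with hδdef
    have hδ : 0 < δ := by positivity
    filter_upwards [Ioo_mem_nhdsGT_of_mem (by simp [hδ] : (0:ℝ) ∈ Ico (0:ℝ) δ)]
      with σ hσ
    obtain ⟨hσ0, hσδ⟩ := hσ
    have hσ2 : (0:ℝ) < σ ^ 2 := by positivity
    have hrt : (0:ℝ) < Real.sqrt (2 * (μ + γ)) := Real.sqrt_pos.mpr (by positivity)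
    have ha : 0 ≤ β ^ 2 - 2 * σ ^ 2 * (μ + γ) := by
      have h1 : σ * Real.sqrt (2 * (μ + γ)) < β := by
        rw [hδdef, lt_div_iff₀ hrt] at hσδ; exact hσδ
      nlinarith [Real.sq_sqrt (by positivity : (0:ℝ) ≤ 2 * (μ + γ)),
        mul_pos hσ0 hrt]
    set s := Real.sqrt (β ^ 2 - 2 * σ ^ 2 * (μ + γ)) with hs
    have hs2 : s ^ 2 = β ^ 2 - 2 * σ ^ 2 * (μ + γ) := Real.sq_sqrt ha
    have hsnn : 0 ≤ s := Real.sqrt_nonneg _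
    have hsb : s + β ≠ 0 := by positivity
    clear_value s
    rw [hF]
    dsimp only
    rw [← hs]
    field_simp
    linear_combination -hs2
  · -- Second limit
    set G : ℝ → ℝ := fun σ => N - (4 * (μ + γ) / N) /
        (Real.sqrt ((2 * σ ^ 2 + 2 * β / N) ^ 2 - 32 * (μ + γ) * σ ^ 2 / N ^ 2)
          + (2 * σ ^ 2 + 2 * β / N)) with hG
    have hGlim : Tendsto G (𝓝[>] (0:ℝ)) (𝓝 Istar) := by
      have hc : Continuous fun σ : ℝ =>
          Real.sqrt ((2 * σ ^ 2 + 2 * β / N) ^ 2 - 32 * (μ + γ) * σ ^ 2 / N ^ 2)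
            + (2 * σ ^ 2 + 2 * β / N) := by continuity
      have h0 : Real.sqrt ((2 * (0:ℝ) ^ 2 + 2 * β / N) ^ 2 - 32 * (μ + γ) * 0 ^ 2 / N ^ 2)
            + (2 * (0:ℝ) ^ 2 + 2 * β / N) = 4 * β / N := by
        norm_num [Real.sqrt_sq (by positivity : (0:ℝ) ≤ 2 * β / N)]; ring
      have hden : Tendsto (fun σ : ℝ =>
          Real.sqrt ((2 * σ ^ 2 + 2 * β / N) ^ 2 - 32 * (μ + γ) * σ ^ 2 / N ^ 2)
            + (2 * σ ^ 2 + 2 * β / N)) (𝓝 0) (𝓝 (4 * β / N)) := by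
        have h := hc.tendsto 0
        rwa [h0] at h
      have hlim := (tendsto_const_nhds (x := N)).sub
        ((tendsto_const_nhds (x := 4 * (μ + γ) / N)).div hden (by positivity))
      have heq : N - (4 * (μ + γ) / N) / (4 * β / N) = Istar := by
        rw [hIstar']; field_simp
      exact (heq ▸ hlim).mono_left nhdsWithin_le_nhds
    refine hGlim.congr' ?_
    set δ : ℝ := β / Real.sqrt (8 * (μ + γ)) with hδdef
    have hδ : 0 < δ := by positivity
    filter_upwards [Ioo_mem_nhdsGT_of_mem (by simp [hδ] : (0:ℝ) ∈ Ico (0:ℝ) δ)]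
      with σ hσ
    obtain ⟨hσ0, hσδ⟩ := hσ
    have hσ2 : (0:ℝ) < σ ^ 2 := by positivity
    have hrt : (0:ℝ) < Real.sqrt (8 * (μ + γ)) := Real.sqrt_pos.mpr (by positivity)
    have hsmall : 8 * (μ + γ) * σ ^ 2 ≤ β ^ 2 := by
      have h1 : σ * Real.sqrt (8 * (μ + γ)) < β := by
        rw [hδdef, lt_div_iff₀ hrt] at hσδ; exact hσδ
      nlinarith [Real.sq_sqrt (by positivity : (0:ℝ) ≤ 8 * (μ + γ)),
        mul_pos hσ0 hrt]
    have ha : 0 ≤ (2 * σ ^ 2 + 2 * β / N) ^ 2 - 32 * (μ + γ) * σ ^ 2 / N ^ 2 := by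
      have hN2 : (0:ℝ) < N ^ 2 := by positivity
      have h2 : 32 * (μ + γ) * σ ^ 2 / N ^ 2 ≤ 4 * β ^ 2 / N ^ 2 :=
        (div_le_div_iff_of_pos_right hN2).mpr (by linarith)
      have key : 0 ≤ ((2 * σ ^ 2 + 2 * β / N) ^ 2 - 32 * (μ + γ) * σ ^ 2 / N ^ 2) * N ^ 2 := by
        have e : ((2 * σ ^ 2 + 2 * β / N) ^ 2 - 32 * (μ + γ) * σ ^ 2 / N ^ 2) * N ^ 2
            = 4 * σ ^ 4 * N ^ 2 + 8 * β * σ ^ 2 * N + 4 * β ^ 2 - 32 * (μ + γ) * σ ^ 2 := by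
          field_simp; ring
        rw [e]; nlinarith [hsmall, mul_pos (mul_pos hσ2 hN) hβ, sq_nonneg (σ ^ 2 * N)]
      nlinarith [key, hN2, sq_nonneg N]
    set t := Real.sqrt ((2 * σ ^ 2 + 2 * β / N) ^ 2 - 32 * (μ + γ) * σ ^ 2 / N ^ 2) with ht
    have ht2 : t ^ 2 = (2 * σ ^ 2 + 2 * β / N) ^ 2 - 32 * (μ + γ) * σ ^ 2 / N ^ 2 :=
      Real.sq_sqrt ha
    have htnn : 0 ≤ t := Real.sqrt_nonneg _
    have htu : t + (2 * σ ^ 2 + 2 * β / N) ≠ 0 := by positivity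
    clear_value t
    -- rewrite the inner sqrt of the original expression
    have hinner : (4 + ((β * N - σ ^ 2 * N ^ 2) / (μ + γ)) * (2 * (μ + γ) / (σ ^ 2 * N ^ 2))) ^ 2
        - 16 * (2 * (μ + γ) / (σ ^ 2 * N ^ 2))
        = ((2 * σ ^ 2 + 2 * β / N) ^ 2 - 32 * (μ + γ) * σ ^ 2 / N ^ 2) / σ ^ 4 := by
      field_simp
      ring
    have hsqrt : Real.sqrt ((4 + ((β * N - σ ^ 2 * N ^ 2) / (μ + γ))
          * (2 * (μ + γ) / (σ ^ 2 * N ^ 2))) ^ 2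
          - 16 * (2 * (μ + γ) / (σ ^ 2 * N ^ 2))) = t / σ ^ 2 := by
      rw [hinner, Real.sqrt_div' _ (by positivity : (0:ℝ) ≤ σ ^ 4), ← ht,
        show σ ^ 4 = (σ ^ 2) ^ 2 by ring, Real.sqrt_sq hσ2.le]
    rw [hG]
    dsimp only
    rw [← ht, hsqrt]
    have ht2' : t ^ 2 * N ^ 2 = (2 * σ ^ 2 * N + 2 * β) ^ 2 - 32 * (μ + γ) * σ ^ 2 := by
      have h := ht2
      field_simp at h
      linear_combination h
    field_simp [hN.ne', hk.ne', hσ2.ne']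
    linear_combination (-1) * ht2'
end

section
/- Concentration of the invariant density as the noise vanishes (Limit Stochastic Threshold Theorem, endemic case): fix N, β, μ, γ > 0 with R₀ᴰ = βN/(μ+γ) > 1, and let 0 < ε < min(I^*, N − I^*). Then ∫_{I^*−ε}^{I^*+ε} p_σ^s(x) dx → 1 as σ → 0⁺ (for all sufficiently small σ > 0 one has R₀ˢ > 1, so the density p_σ^s is defined). -/
open Real MeasureTheory Filter Set Topology

lemma kernel_integrableOn {s c : ℝ} (hs : 0 < s) (hc : 0 < c) :
    IntegrableOn (fun y : ℝ => y ^ (s-1) * Real.exp (-(c*y))) (Ioi 0) := by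
  have h0 := Real.GammaIntegral_convergent hs
  have h1 : IntegrableOn (fun y : ℝ => Real.exp (-(c*y)) * (c*y) ^ (s-1)) (Ioi 0) := by
    have := (MeasureTheory.integrableOn_Ioi_comp_mul_left_iff
      (fun x : ℝ => Real.exp (-x) * x ^ (s-1)) 0 hc).mpr
    simpa using this (by simpa using h0)
  have h2 := h1.const_mul (c ^ (1-s))
  refine IntegrableOn.congr_fun h2 (fun y hy => ?_) measurableSet_Ioi
  have hy0 : (0:ℝ) < y := hy
  rw [Real.mul_rpow hc.le hy0.le]
  rw [show c ^ (1-s) * (Real.exp (-(c*y)) * (c ^ (s-1) * y ^ (s-1)))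
    = (c ^ (1-s) * c ^ (s-1)) * (y ^ (s-1) * Real.exp (-(c*y))) by ring]
  rw [← Real.rpow_add hc]
  norm_num

lemma kernel_integral {s c : ℝ} (hs : 0 < s) (hc : 0 < c) :
    ∫ y in Ioi (0:ℝ), y ^ (s-1) * Real.exp (-(c*y)) = (1/c) ^ s * Real.Gamma s :=
  Real.integral_rpow_mul_exp_neg_mul_Ioi hs hc

lemma I_step {s c : ℝ} (hs : 0 < s) (hc : 0 < c) :
    (1/c) ^ (s+1) * Real.Gamma (s+1) = (s/c) * ((1/c)^s * Real.Gamma s) := by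
  rw [Real.rpow_add (by positivity), Real.Gamma_add_one hs.ne', Real.rpow_one]
  field_simp

lemma kernel_expand {s c θ : ℝ} (hs : 0 < s) :
    ∀ y ∈ Ioi (0:ℝ), (y-θ)^2 * (y ^ (s-1) * Real.exp (-(c*y)))
      = y ^ ((s+2)-1) * Real.exp (-(c*y))
          + (-2*θ) * (y ^ ((s+1)-1) * Real.exp (-(c*y)))
          + θ^2 * (y ^ (s-1) * Real.exp (-(c*y))) := by
  intro y hy
  have hy0 : (0:ℝ) < y := hy
  have e1 : y ^ ((s+1)-1) = y * y ^ (s-1) := by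
    rw [show (s+1)-1 = (s-1)+1 by ring, Real.rpow_add hy0, Real.rpow_one]; ring
  have e2 : y ^ ((s+2)-1) = y^2 * y ^ (s-1) := by
    rw [show (s+2)-1 = (s-1)+2 by ring, Real.rpow_add hy0,
      show (2:ℝ) = ((2:ℕ):ℝ) by norm_num, Real.rpow_natCast]; ring
  rw [e1, e2]; ring

lemma moment_integrableOn {s c θ : ℝ} (hs : 0 < s) (hc : 0 < c) :
    IntegrableOn (fun y : ℝ => (y-θ)^2 * (y ^ (s-1) * Real.exp (-(c*y)))) (Ioi 0) := by
  have h0 : 0 < s + 1 := by linarith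
  have h1 : 0 < s + 2 := by linarith
  refine IntegrableOn.congr_fun ?_ (fun y hy => (kernel_expand hs y hy).symm) measurableSet_Ioi
  exact ((kernel_integrableOn h1 hc).add ((kernel_integrableOn h0 hc).const_mul _)).add
    ((kernel_integrableOn hs hc).const_mul _)

lemma moment_eq {s c θ : ℝ} (hs : 0 < s) (hc : 0 < c) :
    ∫ y in Ioi (0:ℝ), (y-θ)^2 * (y ^ (s-1) * Real.exp (-(c*y)))
      = (s/c^2 + (s/c - θ)^2) * ((1/c)^s * Real.Gamma s) := by
  have h0 : 0 < s + 1 := by linarith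
  have h1 : 0 < s + 2 := by linarith
  rw [setIntegral_congr_fun measurableSet_Ioi (kernel_expand hs)]
  have hA : IntegrableOn (fun y : ℝ => y ^ ((s+2)-1) * Real.exp (-(c*y))
      + (-2*θ) * (y ^ ((s+1)-1) * Real.exp (-(c*y)))) (Ioi 0) :=
    (kernel_integrableOn h1 hc).add ((kernel_integrableOn h0 hc).const_mul _)
  have hB : IntegrableOn (fun y : ℝ => θ^2 * (y ^ (s-1) * Real.exp (-(c*y)))) (Ioi 0) :=
    (kernel_integrableOn hs hc).const_mul _
  rw [integral_add hA hB,
    integral_add (kernel_integrableOn h1 hc) ((kernel_integrableOn h0 hc).const_mul _),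
    integral_const_mul, integral_const_mul, kernel_integral hs hc, kernel_integral h0 hc,
    kernel_integral h1 hc]
  have A := I_step hs hc
  have B := I_step h0 hc
  rw [show s+2 = (s+1)+1 by ring, B, A]
  field_simp
  ring

lemma g_expand {a c : ℝ} :
    ∀ y ∈ Ioi (0:ℝ), y ^ (a-1) * (1+y)^2 * Real.exp (-(c*y))
      = y ^ (a-1) * Real.exp (-(c*y)) + 2 * (y ^ ((a+1)-1) * Real.exp (-(c*y)))
        + y ^ ((a+2)-1) * Real.exp (-(c*y)) := by
  intro y hy
  have hy0 : (0:ℝ) < y := hy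
  have e1 : y ^ ((a+1)-1) = y * y ^ (a-1) := by
    rw [show (a+1)-1 = (a-1)+1 by ring, Real.rpow_add hy0, Real.rpow_one]; ring
  have e2 : y ^ ((a+2)-1) = y^2 * y ^ (a-1) := by
    rw [show (a+2)-1 = (a-1)+2 by ring, Real.rpow_add hy0,
      show (2:ℝ) = ((2:ℕ):ℝ) by norm_num, Real.rpow_natCast]; ring
  rw [e1, e2]; ring

lemma g_integrableOn {a c : ℝ} (ha : 0 < a) (hc : 0 < c) :
    IntegrableOn (fun y : ℝ => y ^ (a-1) * (1+y)^2 * Real.exp (-(c*y))) (Ioi 0) := by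
  have h0 : 0 < a + 1 := by linarith
  have h1 : 0 < a + 2 := by linarith
  refine IntegrableOn.congr_fun ?_ (fun y hy => (g_expand y hy).symm) measurableSet_Ioi
  exact ((kernel_integrableOn ha hc).add ((kernel_integrableOn h0 hc).const_mul _)).add
    (kernel_integrableOn h1 hc)

lemma g_integral {a c : ℝ} (ha : 0 < a) (hc : 0 < c) :
    ∫ y in Ioi (0:ℝ), y ^ (a-1) * (1+y)^2 * Real.exp (-(c*y))
      = (1/c)^a * Real.Gamma a + 2*((1/c)^(a+1) * Real.Gamma (a+1))
        + (1/c)^(a+2) * Real.Gamma (a+2) := by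
  have h0 : 0 < a + 1 := by linarith
  have h1 : 0 < a + 2 := by linarith
  rw [setIntegral_congr_fun measurableSet_Ioi g_expand]
  have hA : IntegrableOn (fun y : ℝ => y ^ (a-1) * Real.exp (-(c*y))
      + 2 * (y ^ ((a+1)-1) * Real.exp (-(c*y)))) (Ioi 0) :=
    (kernel_integrableOn ha hc).add ((kernel_integrableOn h0 hc).const_mul _)
  rw [integral_add hA (kernel_integrableOn h1 hc),
    integral_add (kernel_integrableOn ha hc) ((kernel_integrableOn h0 hc).const_mul _),
    integral_const_mul, kernel_integral ha hc, kernel_integral h0 hc, kernel_integral h1 hc]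

lemma g_moment_expand {a c θ : ℝ} :
    ∀ y ∈ Ioi (0:ℝ), (y-θ)^2 * (y ^ (a-1) * (1+y)^2 * Real.exp (-(c*y)))
      = (y-θ)^2 * (y ^ (a-1) * Real.exp (-(c*y)))
        + 2 * ((y-θ)^2 * (y ^ ((a+1)-1) * Real.exp (-(c*y))))
        + (y-θ)^2 * (y ^ ((a+2)-1) * Real.exp (-(c*y))) := by
  intro y hy
  rw [g_expand y hy]; ring

lemma g_moment_integrableOn {a c θ : ℝ} (ha : 0 < a) (hc : 0 < c) :
    IntegrableOn (fun y : ℝ => (y-θ)^2 * (y ^ (a-1) * (1+y)^2 * Real.exp (-(c*y)))) (Ioi 0) := by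
  have h0 : 0 < a + 1 := by linarith
  have h1 : 0 < a + 2 := by linarith
  refine IntegrableOn.congr_fun ?_ (fun y hy => (g_moment_expand y hy).symm) measurableSet_Ioi
  exact ((moment_integrableOn ha hc).add ((moment_integrableOn h0 hc).const_mul _)).add
    (moment_integrableOn h1 hc)

lemma g_moment_integral {a c θ : ℝ} (ha : 0 < a) (hc : 0 < c) :
    ∫ y in Ioi (0:ℝ), (y-θ)^2 * (y ^ (a-1) * (1+y)^2 * Real.exp (-(c*y)))
      = (a/c^2 + (a/c - θ)^2) * ((1/c)^a * Real.Gamma a)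
        + 2*(((a+1)/c^2 + ((a+1)/c - θ)^2) * ((1/c)^(a+1) * Real.Gamma (a+1)))
        + ((a+2)/c^2 + ((a+2)/c - θ)^2) * ((1/c)^(a+2) * Real.Gamma (a+2)) := by
  have h0 : 0 < a + 1 := by linarith
  have h1 : 0 < a + 2 := by linarith
  rw [setIntegral_congr_fun measurableSet_Ioi g_moment_expand]
  have hA : IntegrableOn (fun y : ℝ => (y-θ)^2 * (y ^ (a-1) * Real.exp (-(c*y)))
      + 2 * ((y-θ)^2 * (y ^ ((a+1)-1) * Real.exp (-(c*y))))) (Ioi 0) :=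
    (moment_integrableOn ha hc).add ((moment_integrableOn h0 hc).const_mul _)
  rw [integral_add hA (moment_integrableOn h1 hc),
    integral_add (moment_integrableOn ha hc) ((moment_integrableOn h0 hc).const_mul _),
    integral_const_mul, moment_eq ha hc, moment_eq h0 hc, moment_eq h1 hc]

lemma y_core {a c θ y1 y2 δ T : ℝ} (hc : 0 < c) (hθ : 0 < θ) (haa : a = c * θ)
    (hy1 : 0 < y1) (hδ : 0 < δ) (h1 : y1 + δ ≤ θ) (h2 : θ + δ ≤ y2)
    (hT : T = (1/c)^a * Real.Gamma a + 2*((1/c)^(a+1) * Real.Gamma (a+1))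
        + (1/c)^(a+2) * Real.Gamma (a+2)) :
    (1 - (θ/c + 6/c^2)/δ^2) * T ≤ (∫ y in y1..y2, y ^ (a-1) * (1+y)^2 * Real.exp (-(c*y)))
      ∧ (∫ y in y1..y2, y ^ (a-1) * (1+y)^2 * Real.exp (-(c*y))) ≤ T := by
  have ha : 0 < a := by rw [haa]; positivity
  have hy12 : y1 ≤ y2 := by linarith
  set g : ℝ → ℝ := fun y => y ^ (a-1) * (1+y)^2 * Real.exp (-(c*y)) with hgdef
  set m : ℝ → ℝ := fun y => (y-θ)^2 * (y ^ (a-1) * (1+y)^2 * Real.exp (-(c*y))) with hmdef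
  have hgnonneg : ∀ y ∈ Ioi (0:ℝ), 0 ≤ g y := by
    intro y hy
    have hy0 : (0:ℝ) ≤ y := (le_of_lt hy)
    simp only [hgdef]
    positivity
  have hgi := g_integrableOn ha hc (c := c)
  have hmi := g_moment_integrableOn (θ := θ) ha hc
  have hsub : Ioc y1 y2 ⊆ Ioi (0:ℝ) := fun y hy => hy1.trans hy.1
  have hIoc : (∫ y in y1..y2, g y) = ∫ y in Ioc y1 y2, g y :=
    intervalIntegral.integral_of_le hy12
  have hgae : 0 ≤ᵐ[volume.restrict (Ioi (0:ℝ))] g :=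
    (ae_restrict_mem measurableSet_Ioi).mono hgnonneg
  have hTval : (∫ y in Ioi (0:ℝ), g y) = T := (g_integral ha hc).trans hT.symm
  have upper : (∫ y in Ioc y1 y2, g y) ≤ T := by
    rw [← hTval]
    exact setIntegral_mono_set hgi hgae (HasSubset.Subset.eventuallyLE hsub)
  refine ⟨?_, by rwa [hIoc]⟩
  -- Chebyshev bound
  have hDmeas : MeasurableSet (Ioi (0:ℝ) \ Ioc y1 y2) :=
    measurableSet_Ioi.diff measurableSet_Ioc
  have hDsub : Ioi (0:ℝ) \ Ioc y1 y2 ⊆ Ioi (0:ℝ) := diff_subset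
  have hdiff : (∫ y in Ioi (0:ℝ) \ Ioc y1 y2, g y)
      = (∫ y in Ioi (0:ℝ), g y) - ∫ y in Ioc y1 y2, g y :=
    integral_diff measurableSet_Ioc hgi hsub
  have stepA : (∫ y in Ioi (0:ℝ) \ Ioc y1 y2, g y)
      ≤ ∫ y in Ioi (0:ℝ) \ Ioc y1 y2, (1/δ^2) * m y := by
    have hmi' : IntegrableOn (fun y : ℝ => (1/δ^2) * m y) (Ioi 0) := hmi.const_mul _
    refine setIntegral_mono_on (hgi.mono_set hDsub)
      (hmi'.mono_set hDsub) hDmeas (fun y hy => ?_)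
    obtain ⟨hy0, hyn⟩ := hy
    have hy0' : (0:ℝ) < y := hy0
    have hgy : 0 ≤ g y := hgnonneg y hy0
    have hdel : δ^2 ≤ (y-θ)^2 := by
      rcases le_or_gt y y1 with hle | hgt
      · nlinarith
      · have : y2 < y := by
          by_contra hcon
          exact hyn ⟨hgt, le_of_not_gt hcon⟩
        nlinarith
    have : g y * 1 ≤ g y * ((y-θ)^2 / δ^2) := by
      apply mul_le_mul_of_nonneg_left _ hgy
      rw [le_div_iff₀ (by positivity)]
      linarith
    calc g y = g y * 1 := (mul_one _).symm
      _ ≤ g y * ((y-θ)^2 / δ^2) := this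
      _ = (1/δ^2) * m y := by simp only [hmdef, hgdef]; ring
  have stepB : (∫ y in Ioi (0:ℝ) \ Ioc y1 y2, (1/δ^2) * m y)
      ≤ (1/δ^2) * ∫ y in Ioi (0:ℝ), m y := by
    rw [integral_const_mul]
    apply mul_le_mul_of_nonneg_left _ (by positivity)
    refine setIntegral_mono_set hmi ?_ (HasSubset.Subset.eventuallyLE hDsub)
    refine (ae_restrict_mem measurableSet_Ioi).mono (fun y hy => ?_)
    have hy0 : (0:ℝ) ≤ y := (le_of_lt hy)
    simp only [hmdef]
    positivity
  -- moment bound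
  have hI0 : (0:ℝ) ≤ (1/c)^a * Real.Gamma a := by
    have := Real.Gamma_pos_of_pos ha; positivity
  have hI1 : (0:ℝ) ≤ (1/c)^(a+1) * Real.Gamma (a+1) := by
    have : (0:ℝ) < a + 1 := by linarith
    have := Real.Gamma_pos_of_pos this; positivity
  have hI2 : (0:ℝ) ≤ (1/c)^(a+2) * Real.Gamma (a+2) := by
    have : (0:ℝ) < a + 2 := by linarith
    have := Real.Gamma_pos_of_pos this; positivity
  have hMle : (∫ y in Ioi (0:ℝ), m y) ≤ (θ/c + 6/c^2) * T := by
    rw [hmdef, g_moment_integral ha hc, hT]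
    have e0 : a/c - θ = 0 := by rw [haa]; field_simp; ring
    have e1 : (a+1)/c - θ = 1/c := by rw [haa]; field_simp; ring
    have e2 : (a+2)/c - θ = 2/c := by rw [haa]; field_simp; ring
    have ea : a/c^2 = θ/c := by rw [haa]; field_simp
    rw [e0, e1, e2, ea]
    have c2 : (0:ℝ) < c^2 := by positivity
    have b1 : (a+1)/c^2 + (1/c)^2 ≤ θ/c + 6/c^2 := by
      rw [haa]
      have e : (c*θ+1)/c^2 + (1/c)^2 = θ/c + 2/c^2 := by field_simp; ring
      rw [e]; gcongr <;> norm_num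
    have b2 : (a+2)/c^2 + (2/c)^2 ≤ θ/c + 6/c^2 := by
      rw [haa]
      have e : (c*θ+2)/c^2 + (2/c)^2 = θ/c + 6/c^2 := by field_simp; ring
      rw [e]
    have b0 : θ/c + (0:ℝ)^2 ≤ θ/c + 6/c^2 := by
      have h6 : (0:ℝ) ≤ 6/c^2 := by positivity
      norm_num; linarith
    have p0 := mul_le_mul_of_nonneg_right b0 hI0
    have p1 := mul_le_mul_of_nonneg_right b1 hI1
    have p2 := mul_le_mul_of_nonneg_right b2 hI2
    linarith [p0, p1, p2]
  have hTnn : 0 ≤ T := by rw [← hTval]; exact setIntegral_nonneg measurableSet_Ioi hgnonneg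
  have final : T - (1/δ^2) * ((θ/c + 6/c^2) * T) ≤ ∫ y in Ioc y1 y2, g y := by
    have h3 : (∫ y in Ioi (0:ℝ) \ Ioc y1 y2, g y) ≤ (1/δ^2) * ((θ/c + 6/c^2) * T) := by
      refine stepA.trans (stepB.trans ?_)
      exact mul_le_mul_of_nonneg_left hMle (by positivity)
    rw [hdiff, hTval] at h3
    linarith
  rw [hIoc]
  calc (1 - (θ/c + 6/c^2)/δ^2) * T = T - (1/δ^2) * ((θ/c + 6/c^2) * T) := by ring
    _ ≤ _ := final

lemma x_to_y {N a c x1 x2 : ℝ} (hN : 0 < N) (hx1 : 0 < x1) (hx12 : x1 ≤ x2) (hx2 : x2 < N) :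
    ∫ x in x1..x2, N^3 * (x ^ (a-1) * (N-x) ^ (-(a+3)) * Real.exp (-c * x / (N-x)))
      = ∫ y in (x1/(N-x1))..(x2/(N-x2)), y ^ (a-1) * (1+y)^2 * Real.exp (-(c*y)) := by
  set f : ℝ → ℝ := fun x => x / (N - x) with hf
  set f' : ℝ → ℝ := fun x => N / (N - x)^2 with hf'
  set g : ℝ → ℝ := fun y => y ^ (a-1) * (1+y)^2 * Real.exp (-(c*y)) with hgdef
  have huIcc : uIcc x1 x2 = Icc x1 x2 := uIcc_of_le hx12
  have hmem : ∀ x ∈ uIcc x1 x2, 0 < x ∧ x < N := by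
    intro x hx; rw [huIcc] at hx
    exact ⟨hx1.trans_le hx.1, lt_of_le_of_lt hx.2 hx2⟩
  have hderiv : ∀ x ∈ uIcc x1 x2, HasDerivAt f (f' x) x := by
    intro x hx
    obtain ⟨h0, hN'⟩ := hmem x hx
    have hne : N - x ≠ 0 := sub_ne_zero.mpr (ne_of_gt hN')
    have := (hasDerivAt_id x).div ((hasDerivAt_id x).const_sub N) hne
    refine HasDerivAt.congr_deriv this ?_
    simp only [hf', id]
    congr 1
    ring
  have hcontf' : ContinuousOn f' (uIcc x1 x2) := by
    apply ContinuousOn.div continuousOn_const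
    · fun_prop
    · intro x hx
      obtain ⟨h0, hN'⟩ := hmem x hx
      have hne : N - x ≠ 0 := sub_ne_zero.mpr (ne_of_gt hN')
      positivity
  have himg : f '' uIcc x1 x2 ⊆ Ioi (0:ℝ) := by
    rintro y ⟨x, hx, rfl⟩
    obtain ⟨h0, hN'⟩ := hmem x hx
    have : 0 < N - x := by linarith
    exact div_pos h0 this
  have hcontg : ContinuousOn g (f '' uIcc x1 x2) := by
    refine ContinuousOn.mono (s := Ioi (0:ℝ)) ?_ himg
    intro y hy
    have hy0 : (0:ℝ) < y := hy
    refine ContinuousWithinAt.mul (ContinuousWithinAt.mul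
      (Real.continuousAt_rpow_const y (a-1) (Or.inl hy0.ne')).continuousWithinAt
      (Continuous.continuousWithinAt (by continuity)))
      (Continuous.continuousWithinAt (by continuity))
  have key := intervalIntegral.integral_comp_smul_deriv' hderiv hcontf' hcontg
  have hcongr : ∫ x in x1..x2, N^3 * (x ^ (a-1) * (N-x) ^ (-(a+3)) * Real.exp (-c * x / (N-x)))
      = ∫ x in x1..x2, f' x • (g ∘ f) x := by
    apply intervalIntegral.integral_congr
    intro x hx
    obtain ⟨h0, hN'⟩ := hmem x hx
    have hNx : (0:ℝ) < N - x := by linarith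
    simp only [hf, hf', hgdef, Function.comp, smul_eq_mul]
    have e1 : (x / (N-x)) ^ (a-1) = x ^ (a-1) / (N-x) ^ (a-1) :=
      Real.div_rpow h0.le hNx.le (a-1)
    have e2 : (1 + x / (N-x)) = N / (N-x) := by field_simp; ring
    have e3 : (N-x) ^ (-(a+3)) = ((N-x) ^ (a-1) * (N-x)^4)⁻¹ := by
      rw [show ((N-x):ℝ)^(4:ℕ) = (N-x) ^ ((4:ℕ):ℝ) by rw [Real.rpow_natCast],
        ← Real.rpow_add hNx, Real.rpow_neg hNx.le,
        show a - 1 + ((4:ℕ):ℝ) = a + 3 by push_cast; ring]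
    have e4 : Real.exp (-c * x / (N-x)) = Real.exp (-(c * (x / (N-x)))) := by
      congr 1; field_simp
    rw [e1, e2, e3, e4]
    have hr1 : (0:ℝ) < (N-x) ^ (a-1) := Real.rpow_pos_of_pos hNx _
    field_simp
  rw [hcongr, key]

open Real MeasureTheory Filter Set Topology

/-- concentration of the invariant density as the noise vanishes
(Limit Stochastic Threshold Theorem, endemic case). -/
theorem concentration_of_invariant_density
    (N β μ γ : ℝ) (hN : 0 < N) (hβ : 0 < β) (hμ : 0 < μ) (hγ : 0 < γ)
    (R0D : ℝ) (hR0D : R0D = β * N / (μ + γ)) (hR : 1 < R0D)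
    (Istar : ℝ) (hIstar : Istar = (1 - 1 / R0D) * N)
    (ε : ℝ) (hε : 0 < ε) (hε' : ε < min Istar (N - Istar))
    (R0S c0 C : ℝ → ℝ)
    (hR0S : ∀ σ, R0S σ = β * N / (μ + γ) - σ ^ 2 * N ^ 2 / (2 * (μ + γ)))
    (hc0 : ∀ σ, c0 σ = 2 * (μ + γ) / (σ ^ 2 * N ^ 2))
    (hC : ∀ σ, C σ = (c0 σ ^ (-(c0 σ * (R0S σ - 1))) *
      ((R0S σ) ^ 2 + (c0 σ)⁻¹ * (R0S σ - 1)) * Real.Gamma (c0 σ * (R0S σ - 1)))⁻¹)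
    (p : ℝ → ℝ → ℝ)
    (hp : ∀ σ x, p σ x = C σ * N ^ 3 * x ^ (c0 σ * (R0S σ - 1) - 1) *
      (N - x) ^ (-(c0 σ * (R0S σ - 1) + 3)) * Real.exp (-(c0 σ) * x / (N - x))) :
    Tendsto (fun σ : ℝ => ∫ x in (Istar - ε)..(Istar + ε), p σ x) (𝓝[>] 0) (𝓝 1) := by
  have hμγ : 0 < μ + γ := by linarith
  have hεI : ε < Istar := lt_of_lt_of_le hε' (min_le_left _ _)
  have hεN : ε < N - Istar := lt_of_lt_of_le hε' (min_le_right _ _)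
  have hR0pos : 0 < R0D := by linarith
  have hIpos : 0 < Istar := by linarith
  have hIltN : Istar < N := by linarith
  set x1 : ℝ := Istar - ε with hx1def
  set x2 : ℝ := Istar + ε with hx2def
  have hx1pos : 0 < x1 := by simp only [hx1def]; linarith
  have hx12 : x1 ≤ x2 := by simp only [hx1def, hx2def]; linarith
  have hx2N : x2 < N := by simp only [hx2def]; linarith
  set y1 : ℝ := x1 / (N - x1) with hy1def
  set y2 : ℝ := x2 / (N - x2) with hy2def
  set θ' : ℝ := R0D - 1 with hθ'def
  have hNx1 : 0 < N - x1 := by simp only [hx1def]; linarith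
  have hNx2 : 0 < N - x2 := by linarith
  have hNI : 0 < N - Istar := by linarith
  have hy1pos : 0 < y1 := div_pos hx1pos hNx1
  have hIq : Istar / (N - Istar) = θ' := by
    rw [hθ'def, hIstar]
    have h1 : N - (1 - 1 / R0D) * N = N / R0D := by field_simp; ring
    rw [h1]
    field_simp
  have hy1θ : y1 < θ' := by
    rw [← hIq, hy1def, div_lt_div_iff₀ hNx1 hNI]
    simp only [hx1def]; nlinarith
  have hθy2 : θ' < y2 := by
    rw [← hIq, hy2def, div_lt_div_iff₀ hNI hNx2]
    simp only [hx2def]; nlinarith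
  set δ : ℝ := min (θ' - y1) (y2 - θ') / 2 with hδdef
  have hδpos : 0 < δ := by
    apply div_pos _ two_pos
    apply lt_min <;> linarith
  have h2δ1 : y1 + 2 * δ ≤ θ' := by
    have := min_le_left (θ' - y1) (y2 - θ'); simp only [hδdef]; linarith
  have h2δ2 : θ' + 2 * δ ≤ y2 := by
    have := min_le_right (θ' - y1) (y2 - θ'); simp only [hδdef]; linarith
  -- limits
  have hclim : Tendsto c0 (𝓝[>] (0:ℝ)) atTop := by
    have h1 : Tendsto (fun σ : ℝ => σ ^ 2 * N ^ 2) (𝓝[>] (0:ℝ)) (𝓝[>] (0:ℝ)) := by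
      rw [tendsto_nhdsWithin_iff]
      constructor
      · have : Tendsto (fun σ : ℝ => σ ^ 2 * N ^ 2) (𝓝 (0:ℝ)) (𝓝 ((0:ℝ)^2 * N^2)) := by
          exact (continuous_pow 2 |>.mul continuous_const).tendsto 0
        simpa using this.mono_left nhdsWithin_le_nhds
      · filter_upwards [self_mem_nhdsWithin] with σ (hσ : 0 < σ)
        exact mem_Ioi.mpr (by positivity)
    have h2 : Tendsto (fun σ : ℝ => (σ ^ 2 * N ^ 2)⁻¹) (𝓝[>] (0:ℝ)) atTop :=
      tendsto_inv_nhdsGT_zero.comp h1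
    have h3 := h2.const_mul_atTop (show (0:ℝ) < 2 * (μ + γ) by linarith)
    refine h3.congr (fun σ => ?_)
    rw [hc0]; field_simp
  have hθlim : Tendsto (fun σ => R0S σ - 1) (𝓝[>] (0:ℝ)) (𝓝 θ') := by
    have h1 : Tendsto (fun σ : ℝ => β * N / (μ + γ) - σ ^ 2 * N ^ 2 / (2 * (μ + γ)) - 1)
        (𝓝 (0:ℝ)) (𝓝 (β * N / (μ + γ) - (0:ℝ) ^ 2 * N ^ 2 / (2 * (μ + γ)) - 1)) :=
      Continuous.tendsto ((continuous_const.sub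
        (((continuous_pow 2).mul continuous_const).div_const _)).sub continuous_const) 0
    have h2 := h1.mono_left (nhdsWithin_le_nhds (s := Ioi (0:ℝ)))
    have h3 : β * N / (μ + γ) - (0:ℝ) ^ 2 * N ^ 2 / (2 * (μ + γ)) - 1 = θ' := by
      rw [hθ'def, hR0D]; norm_num
    rw [h3] at h2
    refine h2.congr (fun σ => ?_)
    rw [hR0S]
  -- lower bound function tends to 1
  have hlow : Tendsto (fun σ => 1 - ((R0S σ - 1) / c0 σ + 6 / (c0 σ) ^ 2) / δ ^ 2)
      (𝓝[>] (0:ℝ)) (𝓝 1) := by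
    have t1 : Tendsto (fun σ => (R0S σ - 1) / c0 σ) (𝓝[>] (0:ℝ)) (𝓝 0) :=
      hθlim.div_atTop hclim
    have hc2 : Tendsto (fun σ => (c0 σ) ^ 2) (𝓝[>] (0:ℝ)) atTop := by
      simpa [sq] using hclim.atTop_mul_atTop₀ hclim
    have t2 : Tendsto (fun σ => (6:ℝ) / (c0 σ) ^ 2) (𝓝[>] (0:ℝ)) (𝓝 0) :=
      tendsto_const_nhds.div_atTop hc2
    have t3 := ((t1.add t2).div_const (δ ^ 2)).const_sub 1
    simpa using t3
  -- eventual sandwich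
  have hev : ∀ᶠ σ in 𝓝[>] (0:ℝ),
      1 - ((R0S σ - 1) / c0 σ + 6 / (c0 σ) ^ 2) / δ ^ 2
        ≤ (∫ x in x1..x2, p σ x)
      ∧ (∫ x in x1..x2, p σ x) ≤ 1 := by
    have hmemIoo : Ioo (θ' - δ) (θ' + δ) ∈ 𝓝 θ' :=
      Ioo_mem_nhds (by linarith) (by linarith)
    filter_upwards [self_mem_nhdsWithin, hθlim.eventually_mem hmemIoo]
      with σ (hσ : 0 < σ) hθmem
    have hc : 0 < c0 σ := by rw [hc0]; positivity
    set θ : ℝ := R0S σ - 1 with hθdef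
    have hθ1 : θ' - δ < θ := hθmem.1
    have hθ2 : θ < θ' + δ := hθmem.2
    have hθpos : 0 < θ := by linarith
    have hyθ1 : y1 + δ ≤ θ := by linarith
    have hyθ2 : θ + δ ≤ y2 := by linarith
    set A : ℝ := c0 σ * θ with hAdef
    have hApos : 0 < A := by positivity
    set T : ℝ := (1/(c0 σ))^A * Real.Gamma A + 2*((1/(c0 σ))^(A+1) * Real.Gamma (A+1))
        + (1/(c0 σ))^(A+2) * Real.Gamma (A+2) with hTdef
    have hcore := y_core hc hθpos hAdef hy1pos hδpos hyθ1 hyθ2 hTdef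
    -- C σ = T⁻¹
    have hTpos : 0 < T := by
      rw [hTdef]
      have g0 := Real.Gamma_pos_of_pos hApos
      have g1 := Real.Gamma_pos_of_pos (show (0:ℝ) < A + 1 by linarith)
      have g2 := Real.Gamma_pos_of_pos (show (0:ℝ) < A + 2 by linarith)
      positivity
    have hCeq : C σ = T⁻¹ := by
      rw [hC σ, ← hθdef, ← hAdef]
      congr 1
      have A1 := I_step hApos hc
      have A2 := I_step (show (0:ℝ) < A + 1 by linarith) hc
      rw [hTdef, show A + 2 = (A+1)+1 by ring, A2, A1]
      have hinv : c0 σ ^ (-A) = (1/(c0 σ))^A := by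
        rw [one_div, Real.inv_rpow hc.le, Real.rpow_neg hc.le]
      rw [hinv]
      have hR0Sθ : R0S σ = 1 + θ := by rw [hθdef]; ring
      rw [hR0Sθ, hAdef]
      field_simp
      ring
    have hCpos : 0 < C σ := by rw [hCeq]; positivity
    have hCT : C σ * T = 1 := by rw [hCeq]; field_simp
    -- rewrite the integral
    have hint : (∫ x in x1..x2, p σ x)
        = C σ * ∫ y in y1..y2, y ^ (A-1) * (1+y)^2 * Real.exp (-(c0 σ * y)) := by
      have e : ∀ x, p σ x = C σ * (N^3 * (x ^ (A-1) * (N-x) ^ (-(A+3))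
          * Real.exp (-(c0 σ) * x / (N-x)))) := by
        intro x
        rw [hp, ← hθdef, ← hAdef]; ring
      rw [intervalIntegral.integral_congr (g := fun x => C σ * (N^3 * (x ^ (A-1)
          * (N-x) ^ (-(A+3)) * Real.exp (-(c0 σ) * x / (N-x))))) (fun x _ => e x),
        intervalIntegral.integral_const_mul,
        x_to_y hN hx1pos hx12 hx2N]
    rw [hint]
    have hJ1 := hcore.1
    have hJ2 := hcore.2
    constructor
    · have := mul_le_mul_of_nonneg_left hJ1 hCpos.le
      calc 1 - (θ / c0 σ + 6 / (c0 σ) ^ 2) / δ ^ 2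
          = (1 - (θ / c0 σ + 6 / (c0 σ) ^ 2) / δ ^ 2) * (C σ * T) := by rw [hCT]; ring
        _ = C σ * ((1 - (θ / c0 σ + 6 / (c0 σ) ^ 2) / δ ^ 2) * T) := by ring
        _ ≤ _ := this
    · have := mul_le_mul_of_nonneg_left hJ2 hCpos.le
      calc C σ * (∫ y in y1..y2, y ^ (A-1) * (1+y)^2 * Real.exp (-(c0 σ * y)))
          ≤ C σ * T := this
        _ = 1 := hCT
  exact tendsto_of_tendsto_of_tendsto_of_le_of_le' hlow tendsto_const_nhds
    (hev.mono (fun σ h => h.1)) (hev.mono (fun σ h => h.2))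
end

section
/- Second derivative of the log-density at the mode: assume R₀ᴾ > 1 and let h_σ(x) = c₀(R₀ᴾ−1) log x − (c₀(R₀ᴾ−1)+4) log(N−x) − c₀ x/(N−x) for x ∈ (0,N). Then h_σ''(I_*(σ)) = −(N/(I_*(σ)(N − I_*(σ))²)) · √((4 + R₀ᴾc₀)² − 16c₀). Moreover, if N, β, μ, γ > 0 are fixed with R₀ᴰ > 1, then h_σ''(I_*(σ)) → −∞ as σ → 0⁺. -/
open Real MeasureTheory Filter Set Topology

lemma aux_d1 (N A B C x : ℝ) (hx : 0 < x) (hxN : x < N) :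
    HasDerivAt (fun y => A * Real.log y - B * Real.log (N - y) - C * y / (N - y))
      (A / x + B / (N - x) - C * N / (N - x) ^ 2) x := by
  have hx0 : x ≠ 0 := hx.ne'
  have hNx : N - x ≠ 0 := (sub_pos.2 hxN).ne'
  have l2 : HasDerivAt (fun y : ℝ => N - y) (-1) x := by
    simpa using (hasDerivAt_id x).const_sub N
  have l1 : HasDerivAt (fun y => Real.log y) x⁻¹ x := Real.hasDerivAt_log hx0
  have l3 : HasDerivAt (fun y => Real.log (N - y)) ((N - x)⁻¹ * -1) x :=
    (Real.hasDerivAt_log hNx).comp x l2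
  have l4 : HasDerivAt (fun y : ℝ => C * y) C x := by
    simpa using (hasDerivAt_id x).const_mul C
  have l5 : HasDerivAt (fun y => C * y / (N - y))
      ((C * (N - x) - C * x * (-1)) / (N - x) ^ 2) x := l4.div l2 hNx
  have := ((l1.const_mul A).sub (l3.const_mul B)).sub l5
  refine this.congr_deriv ?_
  field_simp
  ring

lemma aux_d2 (N A B C x : ℝ) (hx : 0 < x) (hxN : x < N) :
    HasDerivAt (fun y => A / y + B / (N - y) - C * N / (N - y) ^ 2)
      (-(A / x ^ 2) + B / (N - x) ^ 2 - 2 * C * N / (N - x) ^ 3) x := by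
  have hx0 : x ≠ 0 := hx.ne'
  have hNx : N - x ≠ 0 := (sub_pos.2 hxN).ne'
  have l2 : HasDerivAt (fun y : ℝ => N - y) (-1) x := by
    simpa using (hasDerivAt_id x).const_sub N
  have l1 : HasDerivAt (fun y : ℝ => A / y)
      ((0 * x - A * 1) / x ^ 2) x := (hasDerivAt_const x A).div (hasDerivAt_id x) hx0
  have l3 : HasDerivAt (fun y : ℝ => B / (N - y))
      ((0 * (N - x) - B * (-1)) / (N - x) ^ 2) x := (hasDerivAt_const x B).div l2 hNx
  have l4 : HasDerivAt (fun y : ℝ => (N - y) ^ 2) ((2 : ℕ) * (N - x) ^ (2 - 1) * (-1)) x :=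
    l2.pow 2
  have l5 : HasDerivAt (fun y : ℝ => C * N / (N - y) ^ 2)
      ((0 * (N - x) ^ 2 - C * N * ((2 : ℕ) * (N - x) ^ (2 - 1) * (-1))) / ((N - x) ^ 2) ^ 2) x :=
    (hasDerivAt_const x (C * N)).div l4 (pow_ne_zero 2 hNx)
  have := (l1.add l3).sub l5
  refine this.congr_deriv ?_
  field_simp
  ring

lemma aux_deriv2 (N A B C x : ℝ) (hx : 0 < x) (hxN : x < N) :
    deriv (deriv (fun y => A * Real.log y - B * Real.log (N - y) - C * y / (N - y))) x
      = -(A / x ^ 2) + B / (N - x) ^ 2 - 2 * C * N / (N - x) ^ 3 := by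
  have hEq : deriv (fun y => A * Real.log y - B * Real.log (N - y) - C * y / (N - y))
      =ᶠ[𝓝 x] (fun y => A / y + B / (N - y) - C * N / (N - y) ^ 2) := by
    filter_upwards [Ioo_mem_nhds hx hxN] with y hy
    exact (aux_d1 N A B C y hy.1 hy.2).deriv
  rw [hEq.deriv_eq]
  exact (aux_d2 N A B C x hx hxN).deriv

lemma aux_alg (N s c r : ℝ) (hN : 0 < N) (hc : 0 < c) (hcs : c < s)
    (hr : r = Real.sqrt ((4 + s) ^ 2 - 16 * c)) :
    0 < N / 8 * ((4 - s) + r) ∧ N / 8 * ((4 - s) + r) < N ∧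
    -((s - c) / (N / 8 * ((4 - s) + r)) ^ 2)
      + (s - c + 4) / (N - N / 8 * ((4 - s) + r)) ^ 2
      - 2 * c * N / (N - N / 8 * ((4 - s) + r)) ^ 3
      = -(N / ((N / 8 * ((4 - s) + r)) * (N - N / 8 * ((4 - s) + r)) ^ 2)) * r := by
  have hD : 0 < (4 + s) ^ 2 - 16 * c := by
    nlinarith [sq_nonneg (c - 4), mul_pos (sub_pos.2 hcs) (show (0:ℝ) < s + c + 8 by linarith)]
  have hr0 : 0 < r := hr ▸ Real.sqrt_pos.2 hD
  have hr2 : r ^ 2 = (4 + s) ^ 2 - 16 * c := by rw [hr]; exact Real.sq_sqrt hD.le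
  have h1 : 0 < (4 - s) + r := by nlinarith [sq_nonneg (r - s + 4)]
  have h2 : (4 - s) + r < 8 := by nlinarith [sq_nonneg (r - s - 4)]
  have hx : 0 < N / 8 * ((4 - s) + r) := by positivity
  refine ⟨hx, by nlinarith, ?_⟩
  have hNx : 0 < N - N / 8 * ((4 - s) + r) := by nlinarith
  have hcc : c = ((4 + s) ^ 2 - r ^ 2) / 16 := by linarith
  set x := N / 8 * ((4 - s) + r) with hxd
  have hrdiv : r = (8 * x - 4 * N + s * N) / N := by
    rw [hxd]; field_simp; ring
  rw [hcc, hrdiv]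
  field_simp [hx.ne', hNx.ne']
  ring

/-- second derivative of the log-density at the mode, and its blow-up to `-∞`
as the noise vanishes. -/
theorem second_derivative_of_log_density_at_mode
    (N β μ γ : ℝ) (hN : 0 < N) (hβ : 0 < β) (hμ : 0 < μ) (hγ : 0 < γ)
    (R0D : ℝ) (hR0D : R0D = β * N / (μ + γ))
    (R0P c0 Istar : ℝ → ℝ)
    (hR0P : ∀ σ, R0P σ = (β * N - σ ^ 2 * N ^ 2) / (μ + γ))
    (hc0 : ∀ σ, c0 σ = 2 * (μ + γ) / (σ ^ 2 * N ^ 2))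
    (hIstar : ∀ σ, Istar σ = N / 8 *
      ((4 - R0P σ * c0 σ) + Real.sqrt ((4 + R0P σ * c0 σ) ^ 2 - 16 * c0 σ)))
    (h : ℝ → ℝ → ℝ)
    (hh : ∀ σ x, h σ x = c0 σ * (R0P σ - 1) * Real.log x -
      (c0 σ * (R0P σ - 1) + 4) * Real.log (N - x) - c0 σ * x / (N - x)) :
    (∀ σ > (0:ℝ), 1 < R0P σ →
      deriv (deriv (h σ)) (Istar σ) =
        -(N / (Istar σ * (N - Istar σ) ^ 2)) *
          Real.sqrt ((4 + R0P σ * c0 σ) ^ 2 - 16 * c0 σ)) ∧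
    (1 < R0D → Tendsto (fun σ : ℝ => deriv (deriv (h σ)) (Istar σ)) (𝓝[>] 0) atBot) := by
  have hμγ : (0:ℝ) < μ + γ := by linarith
  have key : ∀ σ : ℝ, 0 < σ → 1 < R0P σ →
      0 < Istar σ ∧ Istar σ < N ∧
      deriv (deriv (h σ)) (Istar σ) =
        -(N / (Istar σ * (N - Istar σ) ^ 2)) *
          Real.sqrt ((4 + R0P σ * c0 σ) ^ 2 - 16 * c0 σ) := by
    intro σ hσ hR
    have hc0pos : 0 < c0 σ := by
      rw [hc0]
      exact div_pos (by linarith) (mul_pos (pow_pos hσ 2) (pow_pos hN 2))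
    have hcs : c0 σ < R0P σ * c0 σ := by nlinarith
    obtain ⟨hx, hxN, heq⟩ := aux_alg N (R0P σ * c0 σ) (c0 σ)
      (Real.sqrt ((4 + R0P σ * c0 σ) ^ 2 - 16 * c0 σ)) hN hc0pos hcs rfl
    rw [hIstar σ]
    refine ⟨hx, hxN, ?_⟩
    have hfun : h σ = fun x => (c0 σ * (R0P σ - 1)) * Real.log x -
        (c0 σ * (R0P σ - 1) + 4) * Real.log (N - x) - c0 σ * x / (N - x) := funext (hh σ)
    rw [hfun, aux_deriv2 N _ _ _ _ hx hxN]
    have hA : c0 σ * (R0P σ - 1) = R0P σ * c0 σ - c0 σ := by ring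
    rw [hA]
    exact heq
  refine ⟨fun σ hσ hR => (key σ hσ hR).2.2, ?_⟩
  intro hRD
  rw [hR0D] at hRD
  have hβN : μ + γ < β * N := by
    have := (one_lt_div hμγ).1 hRD
    linarith
  set ε : ℝ := min 1 (min ((β * N - (μ + γ)) / N ^ 2) (4 * β ^ 2 / (N ^ 2 + 32 * (μ + γ))))
    with hεd
  have hε : 0 < ε := by
    refine lt_min one_pos (lt_min (div_pos (by linarith) (pow_pos hN 2)) ?_)
    exact div_pos (by positivity) (by positivity)
  have hmem : Ioo (0:ℝ) ε ∈ 𝓝[>] (0:ℝ) := Ioo_mem_nhdsGT_of_mem ⟨le_refl 0, hε⟩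
  have hg : Tendsto (fun σ : ℝ => -(σ⁻¹ / N ^ 2)) (𝓝[>] (0:ℝ)) atBot := by
    have t1 : Tendsto (fun σ : ℝ => σ⁻¹) (𝓝[>] (0:ℝ)) atTop := tendsto_inv_nhdsGT_zero
    have t2 : Tendsto (fun σ : ℝ => σ⁻¹ / N ^ 2) (𝓝[>] (0:ℝ)) atTop :=
      t1.atTop_div_const (by positivity)
    exact tendsto_neg_atTop_atBot.comp t2
  refine tendsto_atBot_mono' _ ?_ hg
  filter_upwards [hmem] with σ hσI
  obtain ⟨hσ0, hσε⟩ := hσI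
  have e1 : σ < 1 := lt_of_lt_of_le hσε (min_le_left _ _)
  have e2 : σ < (β * N - (μ + γ)) / N ^ 2 :=
    lt_of_lt_of_le hσε (le_trans (min_le_right _ _) (min_le_left _ _))
  have e3 : σ < 4 * β ^ 2 / (N ^ 2 + 32 * (μ + γ)) :=
    lt_of_lt_of_le hσε (le_trans (min_le_right _ _) (min_le_right _ _))
  have e5 : σ ^ 2 ≤ σ := by nlinarith
  have hσ2 : (0:ℝ) < σ ^ 2 := pow_pos hσ0 2
  have e2' : σ * N ^ 2 < β * N - (μ + γ) := (lt_div_iff₀ (pow_pos hN 2)).1 e2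
  have hRP1 : 1 < R0P σ := by
    rw [hR0P]
    refine (one_lt_div hμγ).2 ?_
    nlinarith [mul_le_mul_of_nonneg_right e5 (pow_pos hN 2).le]
  obtain ⟨hx, hxN, heq⟩ := key σ hσ0 hRP1
  rw [heq]
  -- lower bound on the discriminant
  have e4 : σ * (N ^ 2 + 32 * (μ + γ)) < 4 * β ^ 2 := (lt_div_iff₀ (by positivity)).1 e3
  have hP : 0 ≤ (2 * β + 2 * σ ^ 2 * N) ^ 2 - 32 * (μ + γ) * σ ^ 2 - σ ^ 2 * N ^ 2 := by
    nlinarith [mul_le_mul_of_nonneg_right e5 (show (0:ℝ) ≤ N ^ 2 + 32 * (μ + γ) by positivity),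
      mul_pos hβ (mul_pos hσ2 hN), sq_nonneg (σ ^ 2 * N)]
  have heq2 : (4 + R0P σ * c0 σ) ^ 2 - 16 * c0 σ - (σ⁻¹) ^ 2 =
      ((2 * β + 2 * σ ^ 2 * N) ^ 2 - 32 * (μ + γ) * σ ^ 2 - σ ^ 2 * N ^ 2) / (σ ^ 4 * N ^ 2) := by
    rw [hR0P, hc0]
    field_simp
    ring
  have hDge : (σ⁻¹) ^ 2 ≤ (4 + R0P σ * c0 σ) ^ 2 - 16 * c0 σ := by
    have hq : 0 ≤ ((2 * β + 2 * σ ^ 2 * N) ^ 2 - 32 * (μ + γ) * σ ^ 2 - σ ^ 2 * N ^ 2)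
        / (σ ^ 4 * N ^ 2) := div_nonneg hP (by positivity)
    linarith
  have hr_ge : σ⁻¹ ≤ Real.sqrt ((4 + R0P σ * c0 σ) ^ 2 - 16 * c0 σ) := by
    have := Real.sqrt_le_sqrt hDge
    rwa [Real.sqrt_sq (by positivity : (0:ℝ) ≤ σ⁻¹)] at this
  have hden : 0 < Istar σ * (N - Istar σ) ^ 2 :=
    mul_pos hx (pow_pos (sub_pos.2 hxN) 2)
  have hKge : 1 / N ^ 2 ≤ N / (Istar σ * (N - Istar σ) ^ 2) := by
    rw [div_le_div_iff₀ (pow_pos hN 2) hden]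
    have h5 : (N - Istar σ) ^ 2 ≤ N ^ 2 :=
      pow_le_pow_left₀ (by linarith) (by linarith) 2
    have hstep1 : Istar σ * (N - Istar σ) ^ 2 ≤ N * (N - Istar σ) ^ 2 :=
      mul_le_mul_of_nonneg_right hxN.le (sq_nonneg _)
    have hstep2 : N * (N - Istar σ) ^ 2 ≤ N * N ^ 2 := mul_le_mul_of_nonneg_left h5 hN.le
    linarith
  have hfin : σ⁻¹ / N ^ 2 ≤ (N / (Istar σ * (N - Istar σ) ^ 2)) *
      Real.sqrt ((4 + R0P σ * c0 σ) ^ 2 - 16 * c0 σ) := by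
    have hm := mul_le_mul hKge hr_ge (by positivity) (le_trans (by positivity) hKge)
    calc σ⁻¹ / N ^ 2 = 1 / N ^ 2 * σ⁻¹ := by ring
      _ ≤ _ := hm
  linarith
end

section
/- Divergence of the scale function at +∞ and the dichotomy at −∞: the scale function ψ(x) = ∫₀^x φ(ξ) dξ satisfies ψ(x) → +∞ as x → +∞; moreover, if R₀ˢ < 1 then φ is integrable on (−∞, 0] (so ψ has a finite limit as x → −∞), while if R₀ˢ ≥ 1 then ∫_{−∞}^0 φ(ξ) dξ = +∞ (so ψ(x) → −∞ as x → −∞). -/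
open Real MeasureTheory Filter Set Topology

/-- divergence of the scale function at `+∞` and the dichotomy at `-∞`. -/
theorem scale_function_dichotomy
    (N β μ γ σ : ℝ) (hN : 0 < N) (hβ : 0 < β) (hμ : 0 < μ) (hγ : 0 < γ) (hσ : 0 < σ)
    (R0S c0 : ℝ)
    (hR0S : R0S = β * N / (μ + γ) - σ ^ 2 * N ^ 2 / (2 * (μ + γ)))
    (hc0 : c0 = 2 * (μ + γ) / (σ ^ 2 * N ^ 2))
    (φ : ℝ → ℝ)
    (hφ : ∀ ξ, φ ξ = Real.exp (-(2 / (σ ^ 2 * N ^ 2)) * (β * N - μ - γ - σ ^ 2 * N ^ 2 / 2) * ξ +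
      c0 * (Real.exp ξ - 1) - 2 * Real.log ((Real.exp ξ + 1) / 2))) :
    Tendsto (fun x : ℝ => ∫ t in (0:ℝ)..x, φ t) atTop atTop ∧
    (R0S < 1 → IntegrableOn φ (Set.Iic 0)) ∧
    (1 ≤ R0S → ∫⁻ ξ in Set.Iic (0:ℝ), ENNReal.ofReal (φ ξ) = ⊤) := by
  set a : ℝ := -(2 / (σ ^ 2 * N ^ 2)) * (β * N - μ - γ - σ ^ 2 * N ^ 2 / 2) with ha_def
  have hσN : 0 < σ ^ 2 * N ^ 2 := by positivity
  have hμγ : 0 < μ + γ := by linarith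
  have hc0pos : 0 < c0 := by rw [hc0]; positivity
  have haR : a = c0 * (1 - R0S) := by
    rw [ha_def, hc0, hR0S]
    field_simp
    ring
  have hupos : ∀ ξ : ℝ, 0 < (Real.exp ξ + 1) / 2 := fun ξ => by positivity
  -- continuity of φ
  have hgcont : Continuous (fun ξ : ℝ =>
      a * ξ + c0 * (Real.exp ξ - 1) - 2 * Real.log ((Real.exp ξ + 1) / 2)) := by
    have h1 : Continuous fun ξ : ℝ => (Real.exp ξ + 1) / 2 := by continuity
    exact ((continuous_const.mul continuous_id).add
      (continuous_const.mul (Real.continuous_exp.sub continuous_const))).sub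
      (continuous_const.mul (h1.log fun ξ => (hupos ξ).ne'))
  have hcont : Continuous φ := by
    rw [funext hφ]; exact Real.continuous_exp.comp hgcont
  have hφpos : ∀ ξ, 0 < φ ξ := fun ξ => by rw [hφ ξ]; exact Real.exp_pos _
  refine ⟨?_, ?_, ?_⟩
  · -- divergence at +∞
    -- eventual lower bound φ ≥ 1
    have hM : ∀ ξ : ℝ, max 1 (4 * (2 - a - c0) / c0) ≤ ξ → 1 ≤ φ ξ := by
      intro ξ hξ
      have hξ1 : (1 : ℝ) ≤ ξ := le_trans (le_max_left _ _) hξ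
      have hξ0 : (0 : ℝ) ≤ ξ := by linarith
      have hξ2 : 4 * (2 - a - c0) ≤ c0 * ξ := by
        have := le_trans (le_max_right 1 (4 * (2 - a - c0) / c0)) hξ
        calc 4 * (2 - a - c0) = 4 * (2 - a - c0) / c0 * c0 := by
              field_simp
          _ ≤ ξ * c0 := mul_le_mul_of_nonneg_right this hc0pos.le
          _ = c0 * ξ := mul_comm _ _
      have hexp : (1 + ξ / 2) ^ 2 ≤ Real.exp ξ := by
        have h1 : 1 + ξ / 2 ≤ Real.exp (ξ / 2) := by
          have := Real.add_one_le_exp (ξ / 2); linarith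
        have h2 : (1 + ξ / 2) ^ 2 ≤ Real.exp (ξ / 2) ^ 2 := by
          have : (0 : ℝ) ≤ 1 + ξ / 2 := by linarith
          exact pow_le_pow_left₀ this h1 2
        calc (1 + ξ / 2) ^ 2 ≤ Real.exp (ξ / 2) ^ 2 := h2
          _ = Real.exp ξ := by rw [sq, ← Real.exp_add]; ring_nf
      have hlog : Real.log ((Real.exp ξ + 1) / 2) ≤ ξ := by
        have h1 : (Real.exp ξ + 1) / 2 ≤ Real.exp ξ := by
          have : (1 : ℝ) ≤ Real.exp ξ := Real.one_le_exp hξ0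
          linarith
        calc Real.log ((Real.exp ξ + 1) / 2) ≤ Real.log (Real.exp ξ) :=
              Real.log_le_log (hupos ξ) h1
          _ = ξ := Real.log_exp ξ
      rw [hφ ξ]
      apply Real.one_le_exp
      have key : 0 ≤ (a - 2) * ξ + c0 * (Real.exp ξ - 1) := by
        nlinarith [mul_le_mul_of_nonneg_left hexp hc0pos.le,
          mul_le_mul_of_nonneg_right hξ2 hξ0, sq_nonneg ξ]
      nlinarith [hlog]
    set M : ℝ := max 1 (4 * (2 - a - c0) / c0) with hMdef
    have hInt : ∀ u v : ℝ, IntervalIntegrable φ volume u v :=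
      fun u v => hcont.intervalIntegrable u v
    have hmono : Tendsto (fun x : ℝ => x + -M + ∫ t in (0:ℝ)..M, φ t) atTop atTop :=
      tendsto_atTop_add_const_right atTop _ (tendsto_atTop_add_const_right atTop (-M) tendsto_id)
    refine tendsto_atTop_mono' atTop ?_ hmono
    filter_upwards [eventually_ge_atTop M] with x hx
    have hsplit : (∫ t in (0:ℝ)..M, φ t) + ∫ t in M..x, φ t = ∫ t in (0:ℝ)..x, φ t :=
      intervalIntegral.integral_add_adjacent_intervals (hInt 0 M) (hInt M x)
    have hlow : x - M ≤ ∫ t in M..x, φ t := by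
      have h1 : (∫ _ in M..x, (1:ℝ)) = x - M := by simp
      rw [← h1]
      apply intervalIntegral.integral_mono_on hx intervalIntegrable_const (hInt M x)
      intro t ht
      exact hM t ht.1
    linarith
  · -- integrability on Iic 0 when R0S < 1
    intro hR
    have hapos : 0 < a := by rw [haR]; exact mul_pos hc0pos (by linarith)
    have hexpInt : IntegrableOn (fun ξ : ℝ => Real.exp (a * ξ)) (Iic 0) := by
      rw [← (Measure.measurePreserving_neg (volume : Measure ℝ)).integrableOn_comp_preimage
        (Homeomorph.neg ℝ).measurableEmbedding]
      simp only [Function.comp_def, neg_preimage, neg_Iic, neg_zero, mul_neg]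
      rw [integrableOn_Ici_iff_integrableOn_Ioi]
      simpa [neg_mul] using exp_neg_integrableOn_Ioi 0 hapos
    refine Integrable.mono' (hexpInt.const_mul 4) hcont.aestronglyMeasurable.restrict ?_
    filter_upwards [ae_restrict_mem measurableSet_Iic] with ξ (hξ : ξ ≤ 0)
    rw [Real.norm_eq_abs, abs_of_pos (hφpos ξ), hφ ξ]
    have h4 : (4 : ℝ) * Real.exp (a * ξ) = Real.exp (a * ξ + Real.log 4) := by
      rw [Real.exp_add, Real.exp_log (by norm_num)]; ring
    rw [h4]
    apply Real.exp_le_exp.2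
    have he1 : Real.exp ξ ≤ 1 := Real.exp_le_one_iff.2 hξ
    have hlogu : Real.log (1 / 2) ≤ Real.log ((Real.exp ξ + 1) / 2) := by
      apply Real.log_le_log (by norm_num)
      have := (Real.exp_pos ξ).le
      linarith
    have hlog2 : Real.log (1 / 2) = -Real.log 2 := by
      rw [Real.log_div one_ne_zero two_ne_zero, Real.log_one]; ring
    have hlog4 : Real.log 4 = 2 * Real.log 2 := by
      rw [show (4 : ℝ) = 2 ^ 2 by norm_num, Real.log_pow]; push_cast; ring
    nlinarith [hlogu]
  · -- lintegral is ⊤ when 1 ≤ R0S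
    intro hR
    have hanp : a ≤ 0 := by
      rw [haR]
      exact mul_nonpos_of_nonneg_of_nonpos hc0pos.le (by linarith)
    have hlb : ∀ ξ ∈ Iic (0:ℝ), Real.exp (-c0) ≤ φ ξ := by
      intro ξ (hξ : ξ ≤ 0)
      rw [hφ ξ]
      apply Real.exp_le_exp.2
      have haξ : 0 ≤ a * ξ := by
        simpa [neg_mul_neg] using mul_nonneg (neg_nonneg.2 hanp) (neg_nonneg.2 hξ)
      have he1 : Real.exp ξ ≤ 1 := Real.exp_le_one_iff.2 hξ
      have hepos := (Real.exp_pos ξ).le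
      have hlogu : Real.log ((Real.exp ξ + 1) / 2) ≤ 0 :=
        Real.log_nonpos (by positivity) (by linarith)
      have hc : c0 * (-1) ≤ c0 * (Real.exp ξ - 1) :=
        mul_le_mul_of_nonneg_left (by linarith) hc0pos.le
      linarith
    have hmono : ∫⁻ _ in Iic (0:ℝ), ENNReal.ofReal (Real.exp (-c0)) ≤
        ∫⁻ ξ in Iic (0:ℝ), ENNReal.ofReal (φ ξ) :=
      setLIntegral_mono' measurableSet_Iic fun ξ hξ =>
        ENNReal.ofReal_le_ofReal (hlb ξ hξ)
    rw [setLIntegral_const, Real.volume_Iic, ENNReal.mul_top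
      (ENNReal.ofReal_pos.2 (Real.exp_pos _)).ne'] at hmono
    exact top_le_iff.1 hmono
end
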